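/- arXiv:2002.04048 — 9 statements merged into one kernel-verified Lean document; each statement's English description precedes it below -/
import Mathlib

section
/- For any edge-minimal 2-connected graph (S,F), the number of edges satisfies |S| ≤ |F| ≤ 2(|S|-1). -/
open SimpleGraph

/-- Two internally disjoint (and edge-disjoint) `s`-`t` paths exist in `G`, i.e. κ_G(s,t) ≥ 2. -/
def TwoInternallyDisjointPaths {V : Type*} (G : SimpleGraph V) (s t : V) : Prop :=
  ∃ p q : G.Walk s t, p.IsPath ∧ q.IsPath ∧ (∀ e ∈ p.edges, e ∉ q.edges) ∧
    ∀ v ∈ p.support, v ∈ q.support → v = s ∨ v = t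

/-- A graph is 2-connected: at least 3 vertices and two internally disjoint paths
between every pair of distinct vertices. -/
def TwoConnected {V : Type*} [Fintype V] (G : SimpleGraph V) : Prop :=
  3 ≤ Fintype.card V ∧ ∀ s t : V, s ≠ t → TwoInternallyDisjointPaths G s t

set_option linter.unusedSectionVars false

namespace TwoConnWork

open SimpleGraph Walk

variable {V : Type*} [DecidableEq V] {G : SimpleGraph V}

/-- Criterion for an append of two paths being a path. -/
lemma isPath_append' {a b c : V} {p : G.Walk a b} {q : G.Walk b c}
    (hp : p.IsPath) (hq : q.IsPath) (h : ∀ v ∈ p.support, v ∈ q.support → v = b) :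
    (p.append q).IsPath := by
  rw [Walk.isPath_def, Walk.support_append]
  refine List.Nodup.append hp.support_nodup (hq.support_nodup.sublist (List.tail_sublist _)) ?_
  intro v hv hv'
  have hb : v = b := h v hv (List.mem_of_mem_tail hv')
  subst hb
  have := hq.support_nodup
  rw [Walk.support_eq_cons] at this
  exact (List.nodup_cons.mp this).1 hv'

/-- In a path `p.append q`, the two halves share only the junction. -/
lemma eq_junction_of_isPath_append {a b c : V} {p : G.Walk a b} {q : G.Walk b c}
    (h : (p.append q).IsPath) : ∀ v ∈ p.support, v ∈ q.support → v = b := by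
  intro v hv hv'
  by_contra hne
  have hnd := h.support_nodup
  rw [Walk.support_append] at hnd
  have hv'' : v ∈ q.support.tail := by
    rw [Walk.support_eq_cons] at hv'
    rcases List.mem_cons.mp hv' with h1 | h1
    · exact absurd h1 hne
    · exact h1
  exact (List.disjoint_of_nodup_append hnd) hv hv''

lemma length_pos_of_ne {a b : V} (p : G.Walk a b) (h : a ≠ b) : 0 < p.length := by
  cases p with
  | nil => exact absurd rfl h
  | cons h p => simp

/-- First vertex of a walk belonging to a set `T`, as a prefix decomposition. -/
lemma exists_prefix_until {a b : V} (p : G.Walk a b) (T : Set V) (hb : b ∈ T) :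
    ∃ (c : V), c ∈ T ∧ ∃ (q : G.Walk a c) (r : G.Walk c b),
      p = q.append r ∧ ∀ v ∈ q.support, v ∈ T → v = c := by
  induction p with
  | nil =>
    exact ⟨_, hb, Walk.nil, Walk.nil, rfl, by simp⟩
  | @cons u v w huv p ih =>
    by_cases hu : u ∈ T
    · exact ⟨u, hu, Walk.nil, Walk.cons huv p, rfl, by simp⟩
    · obtain ⟨c, hc, q, r, hqr, hq⟩ := ih hb
      refine ⟨c, hc, Walk.cons huv q, r, by rw [Walk.cons_append, hqr], ?_⟩
      intro x hx hxT
      rw [Walk.support_cons] at hx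
      rcases List.mem_cons.mp hx with rfl | hx
      · exact absurd hxT hu
      · exact hq x hx hxT

/-- the endpoints of a path of length ≥ 2 are not joined by an edge of the path. -/
lemma ends_not_mem_edges {x y : V} {p : G.Walk x y} (hp : p.IsPath) (hl : 2 ≤ p.length) :
    s(x, y) ∉ p.edges := by
  intro hmem
  cases p with
  | nil => simp at hl
  | cons h q =>
    rename_i v
    rw [Walk.edges_cons] at hmem
    rcases List.mem_cons.mp hmem with he | he
    · rw [Sym2.eq_iff] at he
      rcases he with ⟨-, h2⟩ | ⟨h1, -⟩
      · subst h2
        have : q = Walk.nil := ((Walk.isPath_iff_eq_nil (p := q)).mp (hp.of_cons))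
        rw [this] at hl; simp at hl
      · exact (G.ne_of_adj h) h1
    · have : x ∈ q.support := Walk.fst_mem_support_of_mem_edges q he
      rw [Walk.cons_isPath_iff] at hp
      exact hp.2 this


section Defs

/-- The conditions on a pair of internally disjoint paths confined to `(S, F)`. -/
def DPred (G : SimpleGraph V) (S : Finset V) (F : Finset (Sym2 V)) {s t : V}
    (p q : G.Walk s t) : Prop :=
  p.IsPath ∧ q.IsPath ∧ (∀ v ∈ p.support, v ∈ S) ∧ (∀ v ∈ q.support, v ∈ S) ∧
  (∀ e ∈ p.edges, e ∈ F) ∧ (∀ e ∈ q.edges, e ∈ F) ∧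
  (∀ e ∈ p.edges, e ∉ q.edges) ∧ (∀ v ∈ p.support, v ∈ q.support → v = s ∨ v = t)

/-- `(S,F)` is internally 2-connected. -/
def Conn2 (G : SimpleGraph V) (S : Finset V) (F : Finset (Sym2 V)) : Prop :=
  ∀ ⦃s t : V⦄, s ∈ S → t ∈ S → s ≠ t → ∃ p q : G.Walk s t, DPred G S F p q

lemma DPred.rev {S : Finset V} {F : Finset (Sym2 V)} {s t : V} {p q : G.Walk s t}
    (h : DPred G S F p q) : DPred G S F p.reverse q.reverse := by
  obtain ⟨h1, h2, h3, h4, h5, h6, h7, h8⟩ := h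
  refine ⟨h1.reverse, h2.reverse, ?_, ?_, ?_, ?_, ?_, ?_⟩
  · intro v hv; exact h3 v (by rwa [Walk.support_reverse, List.mem_reverse] at hv)
  · intro v hv; exact h4 v (by rwa [Walk.support_reverse, List.mem_reverse] at hv)
  · intro e he; exact h5 e (by rwa [Walk.edges_reverse, List.mem_reverse] at he)
  · intro e he; exact h6 e (by rwa [Walk.edges_reverse, List.mem_reverse] at he)
  · intro e he he'
    rw [Walk.edges_reverse, List.mem_reverse] at he he'
    exact h7 e he he'
  · intro v hv hv'
    rw [Walk.support_reverse, List.mem_reverse] at hv hv'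
    exact (h8 v hv hv').symm

lemma DPred.mono {S S' : Finset V} {F F' : Finset (Sym2 V)} {s t : V} {p q : G.Walk s t}
    (hS : S ⊆ S') (hF : F ⊆ F') (h : DPred G S F p q) : DPred G S' F' p q := by
  obtain ⟨h1, h2, h3, h4, h5, h6, h7, h8⟩ := h
  exact ⟨h1, h2, fun v hv => hS (h3 v hv), fun v hv => hS (h4 v hv),
    fun e he => hF (h5 e he), fun e he => hF (h6 e he), h7, h8⟩

end Defs

section Fan

variable {S : Finset V} {F : Finset (Sym2 V)}

/-- Auxiliary step for the fan lemma. -/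
lemma fan_aux {x y t c : V} {P Q : G.Walk x t} (hPp : P.IsPath) (hQp : Q.IsPath)
    (hPS : ∀ v ∈ P.support, v ∈ S) (hQS : ∀ v ∈ Q.support, v ∈ S)
    (hPF : ∀ e ∈ P.edges, e ∈ F) (hQF : ∀ e ∈ Q.edges, e ∈ F)
    (hPQv : ∀ v ∈ P.support, v ∈ Q.support → v = x ∨ v = t)
    (R1 : G.Walk y c) (hR1p : R1.IsPath)
    (hR1S : ∀ v ∈ R1.support, v ∈ S) (hR1F : ∀ e ∈ R1.edges, e ∈ F)
    (hR1T : ∀ v ∈ R1.support, (v ∈ P.support ∨ v ∈ Q.support) → v = c)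
    (hc : c ∈ P.support ∨ c ∈ Q.support) (hcx : c ≠ x) :
    ∃ (Px : G.Walk x t) (Py : G.Walk y t), Px.IsPath ∧ Py.IsPath ∧
      (∀ v ∈ Px.support, v ∈ S) ∧ (∀ v ∈ Py.support, v ∈ S) ∧
      (∀ e ∈ Px.edges, e ∈ F) ∧ (∀ e ∈ Py.edges, e ∈ F) ∧
      (∀ v ∈ Px.support, v ∈ Py.support → v = t) := by
  rcases eq_or_ne c t with rfl | hct
  · -- R1 already reaches t
    refine ⟨P, R1, hPp, hR1p, hPS, hR1S, hPF, hR1F, ?_⟩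
    intro v hvP hvR
    exact hR1T v hvR (Or.inl hvP)
  rcases hc with hcP | hcQ
  · -- c on P ; go Py := R1 ++ P.dropUntil c, Px := Q
    have hsplit := P.take_spec hcP
    have hjunc : ∀ v ∈ (P.takeUntil c hcP).support, v ∈ (P.dropUntil c hcP).support → v = c :=
      eq_junction_of_isPath_append (by rw [hsplit]; exact hPp)
    refine ⟨Q, R1.append (P.dropUntil c hcP), hQp, ?_, hQS, ?_, hQF, ?_, ?_⟩
    · refine isPath_append' hR1p (hPp.dropUntil hcP) ?_
      intro v hv hv'
      exact hR1T v hv (Or.inl (P.support_dropUntil_subset hcP hv'))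
    · intro v hv
      rcases (Walk.mem_support_append_iff _ _).mp hv with hv | hv
      · exact hR1S v hv
      · exact hPS v (P.support_dropUntil_subset hcP hv)
    · intro e he
      rw [Walk.edges_append, List.mem_append] at he
      rcases he with he | he
      · exact hR1F e he
      · exact hPF e (P.edges_dropUntil_subset hcP he)
    · intro v hvQ hvPy
      rcases (Walk.mem_support_append_iff _ _).mp hvPy with hv | hv
      · exfalso
        have := hR1T v hv (Or.inr hvQ)
        subst this
        rcases hPQv v hcP hvQ with h | h
        · exact hcx h
        · exact hct h
      · rcases hPQv v (P.support_dropUntil_subset hcP hv) hvQ with rfl | rfl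
        · exact absurd (hjunc _ ((P.takeUntil _ hcP).start_mem_support) hv).symm hcx
        · rfl
  · -- c on Q ; Py := R1 ++ Q.dropUntil c, Px := P
    have hsplit := Q.take_spec hcQ
    have hjunc : ∀ v ∈ (Q.takeUntil c hcQ).support, v ∈ (Q.dropUntil c hcQ).support → v = c :=
      eq_junction_of_isPath_append (by rw [hsplit]; exact hQp)
    refine ⟨P, R1.append (Q.dropUntil c hcQ), hPp, ?_, hPS, ?_, hPF, ?_, ?_⟩
    · refine isPath_append' hR1p (hQp.dropUntil hcQ) ?_
      intro v hv hv'
      exact hR1T v hv (Or.inr (Q.support_dropUntil_subset hcQ hv'))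
    · intro v hv
      rcases (Walk.mem_support_append_iff _ _).mp hv with hv | hv
      · exact hR1S v hv
      · exact hQS v (Q.support_dropUntil_subset hcQ hv)
    · intro e he
      rw [Walk.edges_append, List.mem_append] at he
      rcases he with he | he
      · exact hR1F e he
      · exact hQF e (Q.edges_dropUntil_subset hcQ he)
    · intro v hvP hvPy
      rcases (Walk.mem_support_append_iff _ _).mp hvPy with hv | hv
      · exfalso
        have := hR1T v hv (Or.inl hvP)
        subst this
        rcases hPQv v hvP hcQ with h | h
        · exact hcx h
        · exact hct h
      · rcases hPQv v hvP (Q.support_dropUntil_subset hcQ hv) with rfl | rfl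
        · exact absurd (hjunc _ ((Q.takeUntil _ hcQ).start_mem_support) hv).symm hcx
        · rfl

/-- Fan lemma: from the 2-connectivity data, two paths from `x` and `y` to `t`
meeting only at `t`. -/
lemma fan (hC : Conn2 G S F) {x y t : V} (hx : x ∈ S) (hy : y ∈ S) (ht : t ∈ S)
    (hxy : x ≠ y) :
    ∃ (Px : G.Walk x t) (Py : G.Walk y t), Px.IsPath ∧ Py.IsPath ∧
      (∀ v ∈ Px.support, v ∈ S) ∧ (∀ v ∈ Py.support, v ∈ S) ∧
      (∀ e ∈ Px.edges, e ∈ F) ∧ (∀ e ∈ Py.edges, e ∈ F) ∧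
      (∀ v ∈ Px.support, v ∈ Py.support → v = t) := by
  rcases eq_or_ne t x with rfl | htx
  · obtain ⟨p, q, hp⟩ := hC hy hx hxy.symm
    refine ⟨Walk.nil, p, IsPath.nil, hp.1, ?_, hp.2.2.1, ?_, hp.2.2.2.2.1, ?_⟩
    · intro v hv; rw [Walk.support_nil, List.mem_singleton] at hv; subst hv; exact hx
    · intro e he; simp at he
    · intro v hv _; rw [Walk.support_nil, List.mem_singleton] at hv; exact hv
  rcases eq_or_ne t y with rfl | hty
  · obtain ⟨p, q, hp⟩ := hC hx hy hxy
    refine ⟨p, Walk.nil, hp.1, IsPath.nil, hp.2.2.1, ?_, hp.2.2.2.2.1, ?_, ?_⟩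
    · intro v hv; rw [Walk.support_nil, List.mem_singleton] at hv; subst hv; exact hy
    · intro e he; simp at he
    · intro v _ hv; rw [Walk.support_nil, List.mem_singleton] at hv; exact hv
  obtain ⟨P, Q, hPp, hQp, hPS, hQS, hPF, hQF, hPQe, hPQv⟩ := hC hx ht htx.symm
  by_cases hyP : y ∈ P.support
  · refine ⟨Q, P.dropUntil y hyP, hQp, hPp.dropUntil hyP, hQS,
      (fun v hv => hPS v (P.support_dropUntil_subset hyP hv)), hQF,
      (fun e he => hPF e (P.edges_dropUntil_subset hyP he)), ?_⟩
    intro v hvQ hvP'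
    have hjunc : ∀ u ∈ (P.takeUntil y hyP).support, u ∈ (P.dropUntil y hyP).support → u = y :=
      eq_junction_of_isPath_append (by rw [P.take_spec hyP]; exact hPp)
    rcases hPQv v (P.support_dropUntil_subset hyP hvP') hvQ with rfl | rfl
    · exact absurd (hjunc _ ((P.takeUntil _ hyP).start_mem_support) hvP') hxy
    · rfl
  by_cases hyQ : y ∈ Q.support
  · refine ⟨P, Q.dropUntil y hyQ, hPp, hQp.dropUntil hyQ, hPS,
      (fun v hv => hQS v (Q.support_dropUntil_subset hyQ hv)), hPF,
      (fun e he => hQF e (Q.edges_dropUntil_subset hyQ he)), ?_⟩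
    intro v hvP hvQ'
    have hjunc : ∀ u ∈ (Q.takeUntil y hyQ).support, u ∈ (Q.dropUntil y hyQ).support → u = y :=
      eq_junction_of_isPath_append (by rw [Q.take_spec hyQ]; exact hQp)
    rcases hPQv v hvP (Q.support_dropUntil_subset hyQ hvQ') with rfl | rfl
    · exact absurd (hjunc _ ((Q.takeUntil _ hyQ).start_mem_support) hvQ') hxy
    · rfl
  -- y is on neither P nor Q
  obtain ⟨R, R', hRp, hR'p, hRS, hR'S, hRF, hR'F, hRR'e, hRR'v⟩ := hC hy ht hty.symm
  have htT : t ∈ P.support ∨ t ∈ Q.support := Or.inl P.end_mem_support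
  obtain ⟨c, hcT, R1, R2, hRsplit, hR1T⟩ :=
    exists_prefix_until R {v | v ∈ P.support ∨ v ∈ Q.support} htT
  obtain ⟨c', hc'T, R1', R2', hRsplit', hR1T'⟩ :=
    exists_prefix_until R' {v | v ∈ P.support ∨ v ∈ Q.support} htT
  have hR1p : R1.IsPath := by
    rw [hRsplit] at hRp; exact hRp.of_append_left
  have hR1'p : R1'.IsPath := by
    rw [hRsplit'] at hR'p; exact hR'p.of_append_left
  have hR1S : ∀ v ∈ R1.support, v ∈ S := by
    intro v hv
    refine hRS v ?_
    rw [hRsplit]; exact (Walk.mem_support_append_iff _ _).mpr (Or.inl hv)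
  have hR1'S : ∀ v ∈ R1'.support, v ∈ S := by
    intro v hv
    refine hR'S v ?_
    rw [hRsplit']; exact (Walk.mem_support_append_iff _ _).mpr (Or.inl hv)
  have hR1F : ∀ e ∈ R1.edges, e ∈ F := by
    intro e he
    refine hRF e ?_
    rw [hRsplit, Walk.edges_append, List.mem_append]; exact Or.inl he
  have hR1'F : ∀ e ∈ R1'.edges, e ∈ F := by
    intro e he
    refine hR'F e ?_
    rw [hRsplit', Walk.edges_append, List.mem_append]; exact Or.inl he
  rcases eq_or_ne c x with rfl | hcx
  · rcases eq_or_ne c' c with rfl | hc'x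
    · -- both prefixes first hit at x : impossible
      exfalso
      have hx1 : c' ∈ R.support := by
        rw [hRsplit]; exact (Walk.mem_support_append_iff _ _).mpr (Or.inl R1.end_mem_support)
      have hx2 : c' ∈ R'.support := by
        rw [hRsplit']; exact (Walk.mem_support_append_iff _ _).mpr (Or.inl R1'.end_mem_support)
      rcases hRR'v c' hx1 hx2 with h | h
      · exact hxy h
      · exact htx h.symm
    · exact fan_aux hPp hQp hPS hQS hPF hQF hPQv R1' hR1'p hR1'S hR1'F hR1T' hc'T hc'x
  · exact fan_aux hPp hQp hPS hQS hPF hQF hPQv R1 hR1p hR1S hR1F hR1T hcT hcx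

end Fan



section GoodDef

/-- Ear decomposition structures inside `G`: vertex/edge sets built from a cycle
by repeatedly adding nontrivial ears. -/
inductive Good (G : SimpleGraph V) [DecidableEq V] : Finset V → Finset (Sym2 V) → Prop
  | base {u : V} (c : G.Walk u u) (hc : c.IsCycle) :
      Good G c.support.toFinset c.edges.toFinset
  | ear {S : Finset V} {F : Finset (Sym2 V)} {x y : V} (hG : Good G S F)
      (hx : x ∈ S) (hy : y ∈ S) (hxy : x ≠ y)
      (p : G.Walk x y) (hp : p.IsPath) (hl : 2 ≤ p.length)
      (hint : ∀ v ∈ p.support, v ∈ S → v = x ∨ v = y) :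
      Good G (S ∪ p.support.toFinset) (F ∪ p.edges.toFinset)

variable {S : Finset V} {F : Finset (Sym2 V)}

lemma Good.mem_of_mem_edge (h : Good G S F) : ∀ e ∈ F, ∀ v ∈ e, v ∈ S := by
  induction h with
  | base c hc =>
    intro e he v hv
    rw [List.mem_toFinset] at he
    rw [List.mem_toFinset]
    induction e with
    | _ a b =>
      rcases Sym2.mem_iff.mp hv with rfl | rfl
      · exact Walk.fst_mem_support_of_mem_edges c he
      · exact Walk.snd_mem_support_of_mem_edges c he
  | @ear S F x y hG hx hy hxy p hp hl hint ih =>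
    intro e he v hv
    rcases Finset.mem_union.mp he with he | he
    · exact Finset.mem_union_left _ (ih e he v hv)
    · rw [List.mem_toFinset] at he
      refine Finset.mem_union_right _ (List.mem_toFinset.mpr ?_)
      induction e with
      | _ a b =>
        rcases Sym2.mem_iff.mp hv with rfl | rfl
        · exact Walk.fst_mem_support_of_mem_edges p he
        · exact Walk.snd_mem_support_of_mem_edges p he

lemma Good.edge_mem (h : Good G S F) : ∀ e ∈ F, e ∈ G.edgeSet := by
  induction h with
  | base c hc =>
    intro e he
    exact c.edges_subset_edgeSet (List.mem_toFinset.mp he)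
  | @ear S F x y hG hx hy hxy p hp hl hint ih =>
    intro e he
    rcases Finset.mem_union.mp he with he | he
    · exact ih e he
    · exact p.edges_subset_edgeSet (List.mem_toFinset.mp he)

lemma cycle_support_toFinset_card {u : V} {c : G.Walk u u} (hc : c.IsCycle) :
    c.support.toFinset.card = c.length := by
  have htail : c.support.tail.length = c.length := by
    have h0 := c.length_support
    rw [c.support_eq_cons, List.length_cons] at h0
    omega
  have htne : c.support.tail ≠ [] := by
    intro h
    rw [h] at htail
    have := hc.three_le_length
    simp at htail
    omega
  have hu : u ∈ c.support.tail := by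
    have h4 : c.support.tail.getLast htne = u := by
      rw [List.getLast_tail]
      exact c.getLast_support
    have h5 := List.getLast_mem htne
    rwa [h4] at h5
  have hset : c.support.toFinset = c.support.tail.toFinset := by
    conv_lhs => rw [c.support_eq_cons]
    rw [List.toFinset_cons]
    exact Finset.insert_eq_self.mpr (List.mem_toFinset.mpr hu)
  rw [hset, List.toFinset_card_of_nodup hc.support_nodup, htail]

lemma cycle_edges_toFinset_card {u : V} {c : G.Walk u u} (hc : c.IsCycle) :
    c.edges.toFinset.card = c.length := by
  rw [List.toFinset_card_of_nodup hc.isTrail.edges_nodup, c.length_edges]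

lemma Good.card_bounds (h : Good G S F) :
    3 ≤ S.card ∧ S.card ≤ F.card ∧ F.card + 3 ≤ 2 * S.card := by
  induction h with
  | base c hc =>
    rw [cycle_support_toFinset_card hc, cycle_edges_toFinset_card hc]
    have := hc.three_le_length
    omega
  | @ear S F x y hG hx hy hxy p hp hl hint ih =>
    have hPcard : p.support.toFinset.card = p.length + 1 := by
      rw [List.toFinset_card_of_nodup hp.support_nodup, p.length_support]
    have hinter : S ∩ p.support.toFinset = {x, y} := by
      ext v
      constructor
      · intro hv
        rw [Finset.mem_inter, List.mem_toFinset] at hv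
        rcases hint v hv.2 hv.1 with rfl | rfl
        · exact Finset.mem_insert_self _ _
        · exact Finset.mem_insert_of_mem (Finset.mem_singleton_self _)
      · intro hv
        rcases Finset.mem_insert.mp hv with rfl | hv
        · exact Finset.mem_inter.mpr ⟨hx, List.mem_toFinset.mpr p.start_mem_support⟩
        · rw [Finset.mem_singleton] at hv
          subst hv
          exact Finset.mem_inter.mpr ⟨hy, List.mem_toFinset.mpr p.end_mem_support⟩
    have hintercard : (S ∩ p.support.toFinset).card = 2 := by
      rw [hinter, Finset.card_insert_of_notMem (by simpa using hxy), Finset.card_singleton]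
    have hvkey : (S ∪ p.support.toFinset).card + 2 = S.card + (p.length + 1) := by
      rw [← hintercard, Finset.card_union_add_card_inter, hPcard]
    have hdisj : Disjoint F p.edges.toFinset := by
      rw [Finset.disjoint_left]
      intro e heF heP
      rw [List.mem_toFinset] at heP
      have hends := hG.mem_of_mem_edge e heF
      have hexy : e = s(x, y) := by
        induction e with
        | _ a b =>
          have ha : a ∈ p.support := Walk.fst_mem_support_of_mem_edges p heP
          have hb : b ∈ p.support := Walk.snd_mem_support_of_mem_edges p heP
          have hab : a ≠ b := G.ne_of_adj (p.adj_of_mem_edges heP)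
          have ha' := hint a ha (hends a (Sym2.mem_mk_left a b))
          have hb' := hint b hb (hends b (Sym2.mem_mk_right a b))
          rcases ha' with rfl | rfl <;> rcases hb' with rfl | rfl
          · exact absurd rfl hab
          · rfl
          · exact Sym2.eq_swap
          · exact absurd rfl hab
      rw [hexy] at heP
      exact ends_not_mem_edges hp hl heP
    have hekey : (F ∪ p.edges.toFinset).card = F.card + p.length := by
      rw [Finset.card_union_of_disjoint hdisj,
        List.toFinset_card_of_nodup (Walk.edges_nodup_of_support_nodup hp.support_nodup),
        p.length_edges]
    obtain ⟨i1, i2, i3⟩ := ih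
    refine ⟨?_, ?_, ?_⟩ <;> omega

end GoodDef



section Sound

variable {S : Finset V} {F : Finset (Sym2 V)}

lemma mem_support_reverse {a b v : V} {p : G.Walk a b} :
    v ∈ p.reverse.support ↔ v ∈ p.support := by
  rw [Walk.support_reverse, List.mem_reverse]

lemma mem_edges_reverse {a b : V} {p : G.Walk a b} {e : Sym2 V} :
    e ∈ p.reverse.edges ↔ e ∈ p.edges := by
  rw [Walk.edges_reverse, List.mem_reverse]

/-- An edge of an ear cannot have both of its endpoints in `S`. -/
lemma ear_edge_not_S {x y : V} {p : G.Walk x y} (hp : p.IsPath) (hl : 2 ≤ p.length)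
    (hint : ∀ v ∈ p.support, v ∈ S → v = x ∨ v = y) {e : Sym2 V}
    (he : e ∈ p.edges) (hES : ∀ v ∈ e, v ∈ S) : False := by
  induction e with
  | _ a b =>
    have ha : a ∈ p.support := Walk.fst_mem_support_of_mem_edges p he
    have hb : b ∈ p.support := Walk.snd_mem_support_of_mem_edges p he
    have hab : a ≠ b := G.ne_of_adj (p.adj_of_mem_edges he)
    have ha' := hint a ha (hES a (Sym2.mem_mk_left a b))
    have hb' := hint b hb (hES b (Sym2.mem_mk_right a b))
    have hexy : s(a, b) = s(x, y) := by
      rcases ha' with rfl | rfl <;> rcases hb' with rfl | rfl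
      · exact absurd rfl hab
      · rfl
      · exact Sym2.eq_swap
      · exact absurd rfl hab
    rw [hexy] at he
    exact ends_not_mem_edges hp hl he

/-- Two walks sharing vertices only at `t` share no edge. -/
lemma no_shared_edge {a1 b1 a2 b2 t : V} {W1 : G.Walk a1 b1} {W2 : G.Walk a2 b2}
    (hshare : ∀ v ∈ W1.support, v ∈ W2.support → v = t) :
    ∀ e ∈ W1.edges, e ∉ W2.edges := by
  intro e he1 he2
  induction e with
  | _ a b =>
    have ha := hshare a (Walk.fst_mem_support_of_mem_edges W1 he1)
      (Walk.fst_mem_support_of_mem_edges W2 he2)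
    have hb := hshare b (Walk.snd_mem_support_of_mem_edges W1 he1)
      (Walk.snd_mem_support_of_mem_edges W2 he2)
    exact G.ne_of_adj (W1.adj_of_mem_edges he1) (ha.trans hb.symm)

lemma start_mem_support_tail {u : V} (c : G.Walk u u) (htne : c.support.tail ≠ []) :
    u ∈ c.support.tail := by
  have h4 : c.support.tail.getLast htne = u := by
    rw [List.getLast_tail]
    exact c.getLast_support
  have h5 := List.getLast_mem htne
  rwa [h4] at h5

/-- The base case: a cycle is internally 2-connected. -/
lemma cycle_conn2 {u : V} {c : G.Walk u u} (hc : c.IsCycle) :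
    Conn2 G c.support.toFinset c.edges.toFinset := by
  intro s t hs ht hst
  rw [List.mem_toFinset] at hs ht
  have hc' : (c.rotate s hs).IsCycle := hc.rotate hs
  -- membership transfer between c and its rotation
  have htne : c.support.tail ≠ [] := by
    intro h
    have h0 := c.length_support
    rw [c.support_eq_cons, h, List.length_cons, List.length_nil] at h0
    have := hc.three_le_length
    omega
  have hrot := c.support_rotate s hs
  have hsupp : ∀ v, v ∈ (c.rotate s hs).support ↔ v ∈ c.support := by
    intro v
    rw [(c.rotate s hs).support_eq_cons, c.support_eq_cons]
    constructor
    · intro hv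
      rcases List.mem_cons.mp hv with rfl | hv
      · rw [← c.support_eq_cons]; exact hs
      · exact List.mem_cons_of_mem _ (hrot.mem_iff.mp hv)
    · intro hv
      rcases List.mem_cons.mp hv with rfl | hv
      · exact List.mem_cons_of_mem _ (hrot.mem_iff.mpr (start_mem_support_tail c htne))
      · exact List.mem_cons_of_mem _ (hrot.mem_iff.mpr hv)
  have hedge : ∀ e, e ∈ (c.rotate s hs).edges ↔ e ∈ c.edges :=
    fun e => (c.rotate_edges s hs).mem_iff
  -- decompose the rotated cycle
  obtain ⟨v, huv, q, hq⟩ := Walk.not_nil_iff.mp hc'.not_nil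
  have hqc : (Walk.cons huv q).IsCycle := hq ▸ hc'
  have hqp : q.IsPath := ((Walk.cons_isCycle_iff q huv).mp hqc).1
  have hnotedge : s(s, v) ∉ q.edges := ((Walk.cons_isCycle_iff q huv).mp hqc).2
  have ht' : t ∈ q.support := by
    have : t ∈ (c.rotate s hs).support := (hsupp t).mpr ht
    rw [hq, Walk.support_cons] at this
    rcases List.mem_cons.mp this with rfl | h
    · exact absurd rfl hst.symm
    · exact h
  have hsplit := q.take_spec ht'
  have htake : (q.takeUntil t ht').IsPath := hqp.takeUntil ht'
  have hdrop : (q.dropUntil t ht').IsPath := hqp.dropUntil ht'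
  have hjunc : ∀ w ∈ (q.takeUntil t ht').support, w ∈ (q.dropUntil t ht').support → w = t :=
    eq_junction_of_isPath_append (by rw [hsplit]; exact hqp)
  have hsnot : s ∉ (q.takeUntil t ht').support := by
    intro habs
    have hsd : s ∈ (q.dropUntil t ht').support := (q.dropUntil t ht').end_mem_support
    exact hst (hjunc s habs hsd)
  have hqsub : ∀ w ∈ q.support, w ∈ c.support := by
    intro w hw
    refine (hsupp w).mp ?_
    rw [hq, Walk.support_cons]
    exact List.mem_cons_of_mem _ hw
  have hqesub : ∀ e ∈ q.edges, e ∈ c.edges := by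
    intro e he
    refine (hedge e).mp ?_
    rw [hq, Walk.edges_cons]
    exact List.mem_cons_of_mem _ he
  have hqnodup : q.edges.Nodup := Walk.edges_nodup_of_support_nodup hqp.support_nodup
  have hqedisj : ∀ e ∈ (q.takeUntil t ht').edges, e ∉ (q.dropUntil t ht').edges := by
    have h0 : ((q.takeUntil t ht').append (q.dropUntil t ht')).edges.Nodup := by
      rw [hsplit]; exact hqnodup
    rw [Walk.edges_append] at h0
    exact fun e he1 he2 => (List.disjoint_of_nodup_append h0) he1 he2
  refine ⟨Walk.cons huv (q.takeUntil t ht'), (q.dropUntil t ht').reverse,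
    ?_, hdrop.reverse, ?_, ?_, ?_, ?_, ?_, ?_⟩
  · rw [Walk.cons_isPath_iff]
    exact ⟨htake, hsnot⟩
  · intro w hw
    rw [Walk.support_cons] at hw
    rcases List.mem_cons.mp hw with rfl | hw
    · exact List.mem_toFinset.mpr hs
    · exact List.mem_toFinset.mpr (hqsub w (q.support_takeUntil_subset ht' hw))
  · intro w hw
    rw [mem_support_reverse] at hw
    exact List.mem_toFinset.mpr (hqsub w (q.support_dropUntil_subset ht' hw))
  · intro e he
    rw [Walk.edges_cons] at he
    rcases List.mem_cons.mp he with rfl | he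
    · refine List.mem_toFinset.mpr ((hedge _).mp ?_)
      rw [hq, Walk.edges_cons]
      exact List.mem_cons_self
    · exact List.mem_toFinset.mpr (hqesub _ (q.edges_takeUntil_subset ht' he))
  · intro e he
    rw [mem_edges_reverse] at he
    exact List.mem_toFinset.mpr (hqesub _ (q.edges_dropUntil_subset ht' he))
  · intro e he he'
    rw [mem_edges_reverse] at he'
    rw [Walk.edges_cons] at he
    rcases List.mem_cons.mp he with rfl | he
    · exact hnotedge (q.edges_dropUntil_subset ht' he')
    · exact hqedisj e he he'
  · intro w hw hw'
    rw [mem_support_reverse] at hw'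
    rw [Walk.support_cons] at hw
    rcases List.mem_cons.mp hw with rfl | hw
    · exact Or.inl rfl
    · exact Or.inr (hjunc w hw hw')

end Sound



section Ear

variable {S : Finset V} {F : Finset (Sym2 V)}

lemma mem_support_of_mem_edges' {a b v : V} {W : G.Walk a b} {e : Sym2 V}
    (he : e ∈ W.edges) (hv : v ∈ e) : v ∈ W.support := by
  induction e with
  | _ c d =>
    rcases Sym2.mem_iff.mp hv with rfl | rfl
    · exact Walk.fst_mem_support_of_mem_edges W he
    · exact Walk.snd_mem_support_of_mem_edges W he

/-- Case of the ear-step: one endpoint interior to the ear, the other in `S`. -/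
lemma ear_caseB (hC : Conn2 G S F) {x y : V} (hx : x ∈ S) (hy : y ∈ S) (hxy : x ≠ y)
    {p : G.Walk x y} (hp : p.IsPath) (hl : 2 ≤ p.length)
    (hint : ∀ v ∈ p.support, v ∈ S → v = x ∨ v = y)
    {s t : V} (hsP : s ∈ p.support) (hsS : s ∉ S) (ht : t ∈ S) :
    ∃ A B : G.Walk s t, DPred G (S ∪ p.support.toFinset) (F ∪ p.edges.toFinset) A B := by
  have hsx : s ≠ x := fun h => hsS (by rw [h]; exact hx)
  have hsy : s ≠ y := fun h => hsS (by rw [h]; exact hy)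
  have hsplit := p.take_spec hsP
  have hp1 : (p.takeUntil s hsP).IsPath := hp.takeUntil hsP
  have hp2 : (p.dropUntil s hsP).IsPath := hp.dropUntil hsP
  have hjP : ∀ v ∈ (p.takeUntil s hsP).support, v ∈ (p.dropUntil s hsP).support → v = s :=
    eq_junction_of_isPath_append (by rw [hsplit]; exact hp)
  have hp1sub : ∀ v ∈ (p.takeUntil s hsP).support, v ∈ p.support :=
    fun v hv => p.support_takeUntil_subset hsP hv
  have hp2sub : ∀ v ∈ (p.dropUntil s hsP).support, v ∈ p.support :=
    fun v hv => p.support_dropUntil_subset hsP hv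
  have hyp1 : y ∉ (p.takeUntil s hsP).support :=
    fun h => hsy (hjP y h (p.dropUntil s hsP).end_mem_support).symm
  have hxp2 : x ∉ (p.dropUntil s hsP).support :=
    fun h => hsx (hjP x (p.takeUntil s hsP).start_mem_support h).symm
  have hp1S : ∀ v ∈ (p.takeUntil s hsP).support, v ∈ S → v = x := by
    intro v hv hvS
    rcases hint v (hp1sub v hv) hvS with rfl | rfl
    · rfl
    · exact absurd hv hyp1
  have hp2S : ∀ v ∈ (p.dropUntil s hsP).support, v ∈ S → v = y := by
    intro v hv hvS
    rcases hint v (hp2sub v hv) hvS with rfl | rfl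
    · exact absurd hv hxp2
    · rfl
  have hpedisj : ∀ e ∈ (p.takeUntil s hsP).edges, e ∉ (p.dropUntil s hsP).edges := by
    have h0 : ((p.takeUntil s hsP).append (p.dropUntil s hsP)).edges.Nodup := by
      rw [hsplit]; exact Walk.edges_nodup_of_support_nodup hp.support_nodup
    rw [Walk.edges_append] at h0
    exact fun e he1 he2 => (List.disjoint_of_nodup_append h0) he1 he2
  obtain ⟨Px, Py, hPxp, hPyp, hPxS, hPyS, hPxF, hPyF, hshare⟩ := fan hC hx hy ht hxy
  refine ⟨(p.takeUntil s hsP).reverse.append Px, (p.dropUntil s hsP).append Py,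
    ?_, ?_, ?_, ?_, ?_, ?_, ?_, ?_⟩
  · refine isPath_append' hp1.reverse hPxp ?_
    intro v hv hv'
    exact hp1S v (mem_support_reverse.mp hv) (hPxS v hv')
  · refine isPath_append' hp2 hPyp ?_
    intro v hv hv'
    exact hp2S v hv (hPyS v hv')
  · intro v hv
    rcases (Walk.mem_support_append_iff _ _).mp hv with hv | hv
    · exact Finset.mem_union_right _ (List.mem_toFinset.mpr
        (hp1sub v (mem_support_reverse.mp hv)))
    · exact Finset.mem_union_left _ (hPxS v hv)
  · intro v hv
    rcases (Walk.mem_support_append_iff _ _).mp hv with hv | hv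
    · exact Finset.mem_union_right _ (List.mem_toFinset.mpr (hp2sub v hv))
    · exact Finset.mem_union_left _ (hPyS v hv)
  · intro e he
    rw [Walk.edges_append, List.mem_append] at he
    rcases he with he | he
    · exact Finset.mem_union_right _ (List.mem_toFinset.mpr
        (p.edges_takeUntil_subset hsP (mem_edges_reverse.mp he)))
    · exact Finset.mem_union_left _ (hPxF e he)
  · intro e he
    rw [Walk.edges_append, List.mem_append] at he
    rcases he with he | he
    · exact Finset.mem_union_right _ (List.mem_toFinset.mpr (p.edges_dropUntil_subset hsP he))
    · exact Finset.mem_union_left _ (hPyF e he)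
  · intro e heA heB
    rw [Walk.edges_append, List.mem_append] at heA heB
    rcases heA with heA | heA <;> rcases heB with heB | heB
    · exact hpedisj e (mem_edges_reverse.mp heA) heB
    · exact ear_edge_not_S hp hl hint
        (p.edges_takeUntil_subset hsP (mem_edges_reverse.mp heA))
        (fun v hv => hPyS v (mem_support_of_mem_edges' heB hv))
    · exact ear_edge_not_S hp hl hint (p.edges_dropUntil_subset hsP heB)
        (fun v hv => hPxS v (mem_support_of_mem_edges' heA hv))
    · exact no_shared_edge hshare e heA heB
  · intro v hvA hvB
    rcases (Walk.mem_support_append_iff _ _).mp hvA with hvA' | hvA' <;>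
      rcases (Walk.mem_support_append_iff _ _).mp hvB with hvB' | hvB'
    · exact Or.inl (hjP v (mem_support_reverse.mp hvA') hvB')
    · have hvx : v = x := hp1S v (mem_support_reverse.mp hvA') (hPyS v hvB')
      refine Or.inr ?_
      rw [hvx]
      exact hshare x Px.start_mem_support (hvx ▸ hvB')
    · have hvy : v = y := hp2S v hvB' (hPxS v hvA')
      refine Or.inr ?_
      rw [hvy]
      exact hshare y (hvy ▸ hvA') Py.start_mem_support
    · exact Or.inr (hshare v hvA' hvB')

/-- Case of the ear-step: both endpoints interior to the ear. -/
lemma ear_caseD (hC : Conn2 G S F) {x y s t : V} (hx : x ∈ S) (hy : y ∈ S) (hxy : x ≠ y)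
    {p : G.Walk x y} (hp : p.IsPath) (hl : 2 ≤ p.length)
    (hint : ∀ v ∈ p.support, v ∈ S → v = x ∨ v = y)
    (P1 : G.Walk x s) (P2 : G.Walk s t) (P3 : G.Walk t y)
    (heq : p = P1.append (P2.append P3))
    (hsS : s ∉ S) (htS : t ∉ S) (hst : s ≠ t) :
    ∃ A B : G.Walk s t, DPred G (S ∪ p.support.toFinset) (F ∪ p.edges.toFinset) A B := by
  have hsx : s ≠ x := fun h => hsS (by rw [h]; exact hx)
  have hsy : s ≠ y := fun h => hsS (by rw [h]; exact hy)
  have htx : t ≠ x := fun h => htS (by rw [h]; exact hx)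
  have hty : t ≠ y := fun h => htS (by rw [h]; exact hy)
  have hP1p : P1.IsPath := by rw [heq] at hp; exact hp.of_append_left
  have h23p : (P2.append P3).IsPath := by rw [heq] at hp; exact hp.of_append_right
  have hP2p : P2.IsPath := h23p.of_append_left
  have hP3p : P3.IsPath := h23p.of_append_right
  have hj12 : ∀ v ∈ P1.support, v ∈ (P2.append P3).support → v = s :=
    eq_junction_of_isPath_append (by rw [← heq]; exact hp)
  have hj23 : ∀ v ∈ P2.support, v ∈ P3.support → v = t :=
    eq_junction_of_isPath_append h23p
  have hP1sub : ∀ v ∈ P1.support, v ∈ p.support := by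
    intro v hv
    rw [heq]
    exact (Walk.mem_support_append_iff _ _).mpr (Or.inl hv)
  have hP2sub : ∀ v ∈ P2.support, v ∈ p.support := by
    intro v hv
    rw [heq]
    exact (Walk.mem_support_append_iff _ _).mpr
      (Or.inr ((Walk.mem_support_append_iff _ _).mpr (Or.inl hv)))
  have hP3sub : ∀ v ∈ P3.support, v ∈ p.support := by
    intro v hv
    rw [heq]
    exact (Walk.mem_support_append_iff _ _).mpr
      (Or.inr ((Walk.mem_support_append_iff _ _).mpr (Or.inr hv)))
  have hP1e : ∀ e ∈ P1.edges, e ∈ p.edges := by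
    intro e he
    rw [heq, Walk.edges_append, List.mem_append]
    exact Or.inl he
  have hP2e : ∀ e ∈ P2.edges, e ∈ p.edges := by
    intro e he
    rw [heq, Walk.edges_append, List.mem_append]
    refine Or.inr ?_
    rw [Walk.edges_append, List.mem_append]
    exact Or.inl he
  have hP3e : ∀ e ∈ P3.edges, e ∈ p.edges := by
    intro e he
    rw [heq, Walk.edges_append, List.mem_append]
    refine Or.inr ?_
    rw [Walk.edges_append, List.mem_append]
    exact Or.inr he
  have hsp3 : s ∉ P3.support := fun h => hst (hj23 s P2.start_mem_support h)
  have hp1S : ∀ v ∈ P1.support, v ∈ S → v = x := by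
    intro v hv hvS
    rcases hint v (hP1sub v hv) hvS with rfl | rfl
    · rfl
    · exact absurd (hj12 v hv ((Walk.mem_support_append_iff _ _).mpr
        (Or.inr P3.end_mem_support))) hsy.symm
  have hP2S : ∀ v ∈ P2.support, v ∈ S → False := by
    intro v hv hvS
    rcases hint v (hP2sub v hv) hvS with rfl | rfl
    · exact hsx (hj12 v P1.start_mem_support
        ((Walk.mem_support_append_iff _ _).mpr (Or.inl hv))).symm
    · exact hty (hj23 v hv P3.end_mem_support).symm
  have hP3S : ∀ v ∈ P3.support, v ∈ S → v = y := by
    intro v hv hvS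
    rcases hint v (hP3sub v hv) hvS with rfl | rfl
    · exact absurd (hj12 v P1.start_mem_support ((Walk.mem_support_append_iff _ _).mpr
        (Or.inr hv))) hsx.symm
    · rfl
  -- edge-disjointness of the three pieces
  have hpnodup : (P1.edges ++ (P2.edges ++ P3.edges)).Nodup := by
    have h0 : p.edges.Nodup := Walk.edges_nodup_of_support_nodup hp.support_nodup
    rw [heq, Walk.edges_append, Walk.edges_append] at h0
    exact h0
  have hd12 : ∀ e ∈ P2.edges, e ∉ P1.edges := by
    intro e he2 he1
    exact (List.disjoint_of_nodup_append hpnodup) he1 (List.mem_append_left _ he2)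
  have hd23 : ∀ e ∈ P2.edges, e ∉ P3.edges := by
    have h0 := (List.nodup_append.mp hpnodup).2.1
    intro e he2 he3
    exact (List.disjoint_of_nodup_append h0) he2 he3
  obtain ⟨Q, Q2, hQp, _, hQS, _, hQF, _, _, _⟩ := hC hx hy hxy
  have hinner : (Q.append P3.reverse).IsPath := by
    refine isPath_append' hQp hP3p.reverse ?_
    intro v hv hv'
    exact (hP3S v (mem_support_reverse.mp hv') (hQS v hv)).symm ▸
      (hP3S v (mem_support_reverse.mp hv') (hQS v hv))
  refine ⟨P2, P1.reverse.append (Q.append P3.reverse), hP2p, ?_, ?_, ?_, ?_, ?_, ?_, ?_⟩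
  · refine isPath_append' hP1p.reverse hinner ?_
    intro v hv hv'
    rw [mem_support_reverse] at hv
    rcases (Walk.mem_support_append_iff _ _).mp hv' with hv' | hv'
    · exact hp1S v hv (hQS v hv')
    · exfalso
      rw [mem_support_reverse] at hv'
      have hvs : v = s := hj12 v hv ((Walk.mem_support_append_iff _ _).mpr (Or.inr hv'))
      subst hvs
      exact hsp3 hv'
  · intro v hv
    exact Finset.mem_union_right _ (List.mem_toFinset.mpr (hP2sub v hv))
  · intro v hv
    rcases (Walk.mem_support_append_iff _ _).mp hv with hv | hv
    · exact Finset.mem_union_right _ (List.mem_toFinset.mpr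
        (hP1sub v (mem_support_reverse.mp hv)))
    · rcases (Walk.mem_support_append_iff _ _).mp hv with hv | hv
      · exact Finset.mem_union_left _ (hQS v hv)
      · exact Finset.mem_union_right _ (List.mem_toFinset.mpr
          (hP3sub v (mem_support_reverse.mp hv)))
  · intro e he
    exact Finset.mem_union_right _ (List.mem_toFinset.mpr (hP2e e he))
  · intro e he
    rw [Walk.edges_append, List.mem_append] at he
    rcases he with he | he
    · exact Finset.mem_union_right _ (List.mem_toFinset.mpr
        (hP1e e (mem_edges_reverse.mp he)))
    · rw [Walk.edges_append, List.mem_append] at he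
      rcases he with he | he
      · exact Finset.mem_union_left _ (hQF e he)
      · exact Finset.mem_union_right _ (List.mem_toFinset.mpr
          (hP3e e (mem_edges_reverse.mp he)))
  · intro e heA heB
    rw [Walk.edges_append, List.mem_append] at heB
    rcases heB with heB | heB
    · exact hd12 e heA (mem_edges_reverse.mp heB)
    · rw [Walk.edges_append, List.mem_append] at heB
      rcases heB with heB | heB
      · exact ear_edge_not_S hp hl hint (hP2e e heA)
          (fun v hv => hQS v (mem_support_of_mem_edges' heB hv))
      · exact hd23 e heA (mem_edges_reverse.mp heB)
  · intro v hvA hvB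
    rcases (Walk.mem_support_append_iff _ _).mp hvB with hvB | hvB
    · exact Or.inl (hj12 v (mem_support_reverse.mp hvB)
        ((Walk.mem_support_append_iff _ _).mpr (Or.inl hvA)))
    · rcases (Walk.mem_support_append_iff _ _).mp hvB with hvB | hvB
      · exact absurd (hQS v hvB) (fun h => hP2S v hvA h)
      · exact Or.inr (hj23 v hvA (mem_support_reverse.mp hvB))

/-- The ear-step preserves internal 2-connectivity. -/
lemma ear_conn2 (hC : Conn2 G S F) {x y : V} (hx : x ∈ S) (hy : y ∈ S) (hxy : x ≠ y)
    {p : G.Walk x y} (hp : p.IsPath) (hl : 2 ≤ p.length)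
    (hint : ∀ v ∈ p.support, v ∈ S → v = x ∨ v = y) :
    Conn2 G (S ∪ p.support.toFinset) (F ∪ p.edges.toFinset) := by
  intro s t hs ht hst
  by_cases hsS : s ∈ S <;> by_cases htS : t ∈ S
  · obtain ⟨P, Q, hd⟩ := hC hsS htS hst
    exact ⟨P, Q, hd.mono Finset.subset_union_left Finset.subset_union_left⟩
  · have htP : t ∈ p.support := by
      rcases Finset.mem_union.mp ht with h | h
      · exact absurd h htS
      · exact List.mem_toFinset.mp h
    obtain ⟨A, B, hd⟩ := ear_caseB hC hx hy hxy hp hl hint htP htS hsS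
    exact ⟨A.reverse, B.reverse, hd.rev⟩
  · have hsP : s ∈ p.support := by
      rcases Finset.mem_union.mp hs with h | h
      · exact absurd h hsS
      · exact List.mem_toFinset.mp h
    exact ear_caseB hC hx hy hxy hp hl hint hsP hsS htS
  · have hsP : s ∈ p.support := by
      rcases Finset.mem_union.mp hs with h | h
      · exact absurd h hsS
      · exact List.mem_toFinset.mp h
    have hsplit := p.take_spec hsP
    have htP : t ∈ p.support := by
      rcases Finset.mem_union.mp ht with h | h
      · exact absurd h htS
      · exact List.mem_toFinset.mp h
    have htIn : t ∈ ((p.takeUntil s hsP).append (p.dropUntil s hsP)).support := by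
      rw [hsplit]; exact htP
    rcases (Walk.mem_support_append_iff _ _).mp htIn with htIn | htIn
    · have hsplit2 := (p.takeUntil s hsP).take_spec htIn
      have heq : p = (((p.takeUntil s hsP).takeUntil t htIn).append
          ((((p.takeUntil s hsP).dropUntil t htIn)).append (p.dropUntil s hsP))) := by
        rw [← hsplit2, ← Walk.append_assoc] at hsplit
        exact hsplit.symm
      obtain ⟨A, B, hd⟩ := ear_caseD hC hx hy hxy hp hl hint _ _ _ heq htS hsS hst.symm
      exact ⟨A.reverse, B.reverse, hd.rev⟩
    · have hsplit2 := (p.dropUntil s hsP).take_spec htIn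
      have heq : p = ((p.takeUntil s hsP).append
          (((p.dropUntil s hsP).takeUntil t htIn).append
            ((p.dropUntil s hsP).dropUntil t htIn))) := by
        rw [hsplit2, hsplit]
      exact ear_caseD hC hx hy hxy hp hl hint _ _ _ heq hsS htS hst

/-- Soundness : every `Good` pair is internally 2-connected. -/
lemma Good.conn2 (h : Good G S F) : Conn2 G S F := by
  induction h with
  | base c hc => exact cycle_conn2 hc
  | @ear S F x y hG hx hy hxy p hp hl hint ih => exact ear_conn2 ih hx hy hxy hp hl hint

end Ear



section Grow

variable {S : Finset V} {F : Finset (Sym2 V)}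

/-- Grow a `Good` pair by an ear through a new vertex `v`. -/
lemma Good.grow [Fintype V] [DecidableRel G.Adj] (h : Good G S F)
    (hC : Conn2 G Finset.univ G.edgeFinset)
    {v : V} (hv : v ∉ S) : ∃ S' F', Good G S' F' ∧ S ⊆ S' ∧ v ∈ S' := by
  obtain ⟨hcard3, -, -⟩ := h.card_bounds
  obtain ⟨x, hx, y, hy, hxy⟩ := Finset.one_lt_card.mp (show 1 < S.card by omega)
  obtain ⟨Px, Py, hPxp, hPyp, -, -, -, -, hshare⟩ :=
    fan hC (Finset.mem_univ x) (Finset.mem_univ y) (Finset.mem_univ v) hxy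
  obtain ⟨a, haS, q1, r1, hq1eq, hq1T⟩ :=
    exists_prefix_until Px.reverse (↑S : Set V) (by simpa using hx)
  obtain ⟨b, hbS, q2, r2, hq2eq, hq2T⟩ :=
    exists_prefix_until Py.reverse (↑S : Set V) (by simpa using hy)
  have haS' : a ∈ S := by simpa using haS
  have hbS' : b ∈ S := by simpa using hbS
  have hq1p : q1.IsPath := by
    have := hPxp.reverse
    rw [hq1eq] at this
    exact this.of_append_left
  have hq2p : q2.IsPath := by
    have := hPyp.reverse
    rw [hq2eq] at this
    exact this.of_append_left
  have hq1sub : ∀ w ∈ q1.support, w ∈ Px.support := by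
    intro w hw
    have : w ∈ Px.reverse.support := by
      rw [hq1eq]
      exact (Walk.mem_support_append_iff _ _).mpr (Or.inl hw)
    exact mem_support_reverse.mp this
  have hq2sub : ∀ w ∈ q2.support, w ∈ Py.support := by
    intro w hw
    have : w ∈ Py.reverse.support := by
      rw [hq2eq]
      exact (Walk.mem_support_append_iff _ _).mpr (Or.inl hw)
    exact mem_support_reverse.mp this
  have hab : a ≠ b := by
    intro hEq
    have ha1 : a ∈ Px.support := hq1sub a q1.end_mem_support
    have hb1 : a ∈ Py.support := by rw [hEq]; exact hq2sub b q2.end_mem_support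
    exact hv ((hshare a ha1 hb1) ▸ haS')
  have hq1len : 1 ≤ q1.length := by
    by_contra hlen
    push_neg at hlen
    have h0 : q1.length = 0 := by omega
    have : v = a := Walk.eq_of_length_eq_zero h0
    exact hv (this ▸ haS')
  have hq2len : 1 ≤ q2.length := by
    by_contra hlen
    push_neg at hlen
    have h0 : q2.length = 0 := by omega
    have : v = b := Walk.eq_of_length_eq_zero h0
    exact hv (this ▸ hbS')
  have hearp : (q1.reverse.append q2).IsPath := by
    refine isPath_append' hq1p.reverse hq2p ?_
    intro w hw hw'
    exact hshare w (hq1sub w (mem_support_reverse.mp hw)) (hq2sub w hw')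
  have hearlen : 2 ≤ (q1.reverse.append q2).length := by
    rw [Walk.length_append, Walk.length_reverse]
    omega
  have hearint : ∀ w ∈ (q1.reverse.append q2).support, w ∈ S → w = a ∨ w = b := by
    intro w hw hwS
    rcases (Walk.mem_support_append_iff _ _).mp hw with hw | hw
    · exact Or.inl (hq1T w (mem_support_reverse.mp hw) (by simpa using hwS))
    · exact Or.inr (hq2T w hw (by simpa using hwS))
  refine ⟨S ∪ (q1.reverse.append q2).support.toFinset,
    F ∪ (q1.reverse.append q2).edges.toFinset,
    Good.ear h haS' hbS' hab _ hearp hearlen hearint, Finset.subset_union_left, ?_⟩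
  refine Finset.mem_union_right _ (List.mem_toFinset.mpr ?_)
  refine (Walk.mem_support_append_iff _ _).mpr (Or.inl ?_)
  exact mem_support_reverse.mpr q1.start_mem_support

/-- Extend a `Good` pair to a spanning one. -/
lemma Good.to_univ [Fintype V] [DecidableRel G.Adj]
    (hC : Conn2 G Finset.univ G.edgeFinset)
    (h : Good G S F) : ∃ F', Good G Finset.univ F' := by
  suffices H : ∀ (k : ℕ) (S : Finset V) (F : Finset (Sym2 V)), Good G S F →
      (Finset.univ : Finset V).card - S.card ≤ k → ∃ F', Good G (Finset.univ : Finset V) F' by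
    exact H ((Finset.univ : Finset V).card - S.card) S F h le_rfl
  intro k
  induction k with
  | zero =>
    intro S F h hle
    have h1 := Finset.card_le_univ S
    rw [Finset.card_univ] at hle
    have hS : S = Finset.univ := Finset.eq_univ_of_card S (by omega)
    exact ⟨F, hS ▸ h⟩
  | succ k ih =>
    intro S F h hle
    by_cases hS : S = Finset.univ
    · exact ⟨F, hS ▸ h⟩
    · obtain ⟨v, hv⟩ : ∃ v, v ∉ S := by
        by_contra hall
        push_neg at hall
        exact hS (Finset.eq_univ_iff_forall.mpr hall)
      obtain ⟨S', F', h', hsub, hvS'⟩ := h.grow hC hv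
      have hlt : S.card < S'.card :=
        Finset.card_lt_card ⟨hsub, fun hback => hv (hback hvS')⟩
      have h2 := Finset.card_le_univ S'
      exact ih S' F' h' (by rw [Finset.card_univ] at hle ⊢; omega)

end Grow
section Final

variable [Fintype V] [DecidableRel G.Adj]

lemma conn2_univ (h2 : TwoConnected G) : Conn2 G Finset.univ G.edgeFinset := by
  intro s t _ _ hst
  obtain ⟨p, q, hp, hq, hpq, hint⟩ := h2.2 s t hst
  exact ⟨p, q, hp, hq, fun v _ => Finset.mem_univ v, fun v _ => Finset.mem_univ v,
    fun e he => mem_edgeFinset.mpr (p.edges_subset_edgeSet he),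
    fun e he => mem_edgeFinset.mpr (q.edges_subset_edgeSet he), hpq, hint⟩

lemma exists_cycle (h2 : TwoConnected G) : ∃ (u : V) (c : G.Walk u u), c.IsCycle := by
  have hcard := h2.1
  obtain ⟨s, t, hst⟩ := Fintype.exists_pair_of_one_lt_card (α := V) (by omega)
  obtain ⟨p, q, hp, hq, hpq, hint⟩ := h2.2 s t hst
  refine ⟨s, p.append q.reverse, ?_⟩
  rw [Walk.isCycle_def]
  refine ⟨?_, ?_, ?_⟩
  · rw [Walk.isTrail_def, Walk.edges_append, Walk.edges_reverse]
    exact List.Nodup.append hp.isTrail.edges_nodup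
      (List.nodup_reverse.mpr hq.isTrail.edges_nodup)
      (fun e he he' => hpq e he (List.mem_reverse.mp he'))
  · intro h0
    have hlen : (p.append q.reverse).length = 0 := by rw [h0]; rfl
    rw [Walk.length_append, Walk.length_reverse] at hlen
    have := length_pos_of_ne p hst
    omega
  · rw [Walk.support_append]
    have htl : (p.support ++ q.reverse.support.tail).tail
        = p.support.tail ++ q.reverse.support.tail := by
      rw [p.support_eq_cons]
      rfl
    rw [htl]
    have hpnd' : (s :: p.support.tail).Nodup := by
      rw [← p.support_eq_cons]; exact hp.support_nodup
    have hqnd : (t :: q.reverse.support.tail).Nodup := by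
      rw [← q.reverse.support_eq_cons]
      exact hq.reverse.support_nodup
    refine List.Nodup.append (List.nodup_cons.mp hpnd').2 (List.nodup_cons.mp hqnd).2 ?_
    intro v hv hv'
    have hvp : v ∈ p.support := by
      rw [p.support_eq_cons]; exact List.mem_cons_of_mem _ hv
    have hvq : v ∈ q.support := by
      have : v ∈ q.reverse.support := by
        rw [q.reverse.support_eq_cons]; exact List.mem_cons_of_mem _ hv'
      exact mem_support_reverse.mp this
    rcases hint v hvp hvq with rfl | rfl
    · exact (List.nodup_cons.mp hpnd').1 hv
    · exact (List.nodup_cons.mp hqnd).1 hv'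

end Final

end TwoConnWork

open TwoConnWork in
/-- For any edge-minimal 2-connected graph `(S, F)` we have `|S| ≤ |F| ≤ 2(|S| - 1)`. -/
theorem edge_minimal_two_connected_card_bounds {V : Type*} [Fintype V] [DecidableEq V]
    (G : SimpleGraph V) [DecidableRel G.Adj]
    (h2 : TwoConnected G)
    (hmin : ∀ e ∈ G.edgeSet, ¬ TwoConnected (G.deleteEdges {e})) :
    Fintype.card V ≤ G.edgeFinset.card ∧ G.edgeFinset.card ≤ 2 * (Fintype.card V - 1) := by
  classical
  have hCu := conn2_univ (G := G) h2
  obtain ⟨u, c, hc⟩ := exists_cycle (G := G) h2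
  obtain ⟨F0, hGood⟩ := Good.to_univ hCu (Good.base c hc)
  have hF0sub : F0 ⊆ G.edgeFinset := fun e he => mem_edgeFinset.mpr (hGood.edge_mem e he)
  obtain ⟨h3, hlow, hup⟩ := hGood.card_bounds
  rw [Finset.card_univ] at h3 hlow hup
  have hF0 : F0 = G.edgeFinset := by
    by_contra hne
    obtain ⟨e, heG, heF0⟩ := Finset.exists_of_ssubset (lt_of_le_of_ne hF0sub hne)
    refine hmin e (mem_edgeFinset.mp heG) ⟨h2.1, ?_⟩
    intro s t hst
    obtain ⟨p, q, hp, hq, -, -, hpF, hqF, hpq, hint⟩ :=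
      hGood.conn2 (Finset.mem_univ s) (Finset.mem_univ t) hst
    have hpe : ∀ e' ∈ p.edges, e' ∈ (G.deleteEdges {e}).edgeSet := by
      intro e' he'
      rw [edgeSet_deleteEdges]
      refine ⟨mem_edgeFinset.mp (hF0sub (hpF e' he')), ?_⟩
      intro hmem
      rw [Set.mem_singleton_iff] at hmem
      subst hmem
      exact heF0 (hpF e' he')
    have hqe : ∀ e' ∈ q.edges, e' ∈ (G.deleteEdges {e}).edgeSet := by
      intro e' he'
      rw [edgeSet_deleteEdges]
      refine ⟨mem_edgeFinset.mp (hF0sub (hqF e' he')), ?_⟩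
      intro hmem
      rw [Set.mem_singleton_iff] at hmem
      subst hmem
      exact heF0 (hqF e' he')
    refine ⟨p.transfer _ hpe, q.transfer _ hqe, hp.transfer _, hq.transfer _, ?_, ?_⟩
    · intro e' he' he''
      rw [Walk.edges_transfer p hpe] at he'
      rw [Walk.edges_transfer q hqe] at he''
      exact hpq e' he' he''
    · intro v hv hv'
      rw [Walk.support_transfer p hpe] at hv
      rw [Walk.support_transfer q hqe] at hv'
      exact hint v hv hv'
  subst hF0
  exact ⟨hlow, by omega⟩
end

section
/- If G is a 2-connected graph and P is a simple path between two distinct vertices u, v of G (with new internal vertices not in G), then the graph obtained by adding P to G is 2-connected. -/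
open SimpleGraph

/-- The graph obtained from `G` by adding a simple `u`-`v` path with `n` new internal
vertices (the vertices of `Fin n`): if `n = 0` we just add the edge `uv`; otherwise we add
the path `u, 0, 1, …, n-1, v`. -/
def AddPath {V : Type*} (G : SimpleGraph V) (u v : V) (n : ℕ) : SimpleGraph (V ⊕ Fin n) :=
  SimpleGraph.fromRel (fun a b =>
    (∃ x y, a = Sum.inl x ∧ b = Sum.inl y ∧ G.Adj x y) ∨
    (n = 0 ∧ a = Sum.inl u ∧ b = Sum.inl v) ∨
    (∃ i : Fin n, (i : ℕ) = 0 ∧ a = Sum.inl u ∧ b = Sum.inr i) ∨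
    (∃ i : Fin n, (i : ℕ) = n - 1 ∧ a = Sum.inr i ∧ b = Sum.inl v) ∨
    (∃ i j : Fin n, (j : ℕ) = (i : ℕ) + 1 ∧ a = Sum.inr i ∧ b = Sum.inr j))

section WalkLemmas

variable {V : Type*} {G : SimpleGraph V}

lemma AP_append_isPath {a b c : V} {p : G.Walk a b} {q : G.Walk b c}
    (hp : p.IsPath) (hq : q.IsPath)
    (h : ∀ y ∈ p.support, y ∈ q.support → y = b) : (p.append q).IsPath := by
  rw [Walk.isPath_def, Walk.support_append, List.nodup_append]
  refine ⟨hp.support_nodup, hq.support_nodup.sublist (List.tail_sublist _), ?_⟩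
  intro y hyp y' hyt hyy
  subst hyy
  have hb := h y hyp (List.mem_of_mem_tail hyt)
  subst hb
  have hnd := hq.support_nodup
  rw [q.support_eq_cons] at hnd
  exact (List.nodup_cons.mp hnd).1 hyt

lemma AP_exists_prefix {b : V} (T : V → Prop) (hb : T b) :
    ∀ {a : V} (w : G.Walk a b), w.IsPath → ¬ T a →
    ∃ c, T c ∧ ∃ w1 : G.Walk a c, w1.IsPath ∧ (∀ y ∈ w1.support, y ∈ w.support) ∧
      (∀ y ∈ w1.support, T y → y = c) := by
  intro a w
  induction w with
  | nil => intro _ ha; exact absurd hb ha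
  | @cons a x b h p ih =>
    intro hw ha
    by_cases hx : T x
    · refine ⟨x, hx, Walk.cons h Walk.nil, ?_, ?_, ?_⟩
      · simp [Walk.isPath_def, h.ne]
      · intro y hy
        simp only [Walk.support_cons, Walk.support_nil, List.mem_cons] at hy ⊢
        rcases hy with rfl | rfl | hy
        · exact Or.inl rfl
        · exact Or.inr p.start_mem_support
        · exact absurd hy List.not_mem_nil
      · intro y hy hTy
        simp at hy
        rcases hy with rfl | rfl
        · exact absurd hTy ha
        · rfl
    · obtain ⟨c, hc, w1, h1, h2, h3⟩ := ih hb hw.of_cons hx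
      refine ⟨c, hc, Walk.cons h w1, ?_, ?_, ?_⟩
      · rw [Walk.cons_isPath_iff]
        exact ⟨h1, fun hmem => ((Walk.cons_isPath_iff _ _).mp hw).2 (h2 _ hmem)⟩
      · intro y hy
        rw [Walk.support_cons, List.mem_cons] at hy ⊢
        rcases hy with rfl | hy
        · exact Or.inl rfl
        · exact Or.inr (h2 _ hy)
      · intro y hy hTy
        rw [Walk.support_cons, List.mem_cons] at hy
        rcases hy with rfl | hy
        · exact absurd hTy ha
        · exact h3 y hy hTy

lemma AP_not_end_mem_takeUntil [DecidableEq V] {a b c : V} {w : G.Walk a b} (hw : w.IsPath)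
    (h : c ∈ w.support) (hcb : c ≠ b) : b ∉ (w.takeUntil c h).support := by
  intro hbt
  have hnd : ((w.takeUntil c h).append (w.dropUntil c h)).support.Nodup := by
    rw [Walk.take_spec]; exact hw.support_nodup
  rw [Walk.support_append, List.nodup_append] at hnd
  have hbd : b ∈ (w.dropUntil c h).support.tail := by
    have hmem : b ∈ (w.dropUntil c h).support := Walk.end_mem_support _
    rw [Walk.support_eq_cons, List.mem_cons] at hmem
    rcases hmem with rfl | hmem
    · exact absurd rfl hcb
    · exact hmem
  exact hnd.2.2 b hbt b hbd rfl

lemma AP_tidp_symm {s t : V} (h : TwoInternallyDisjointPaths G s t) :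
    TwoInternallyDisjointPaths G t s := by
  obtain ⟨p, q, hp, hq, he, hv⟩ := h
  refine ⟨p.reverse, q.reverse, hp.reverse, hq.reverse, ?_, ?_⟩
  · intro e hep heq
    rw [Walk.edges_reverse, List.mem_reverse] at hep heq
    exact he e hep heq
  · intro a hap haq
    rw [Walk.support_reverse, List.mem_reverse] at hap haq
    exact (hv a hap haq).symm

lemma AP_fan_step [DecidableEq V] {x u v s : V} {P Q : G.Walk x u} (hP : P.IsPath) (hQ : Q.IsPath)
    (hPQ : ∀ a ∈ P.support, a ∈ Q.support → a = x ∨ a = u)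
    {S1 : G.Walk v s} (hS1 : S1.IsPath)
    (hsP : s ∈ P.support) (hsu : s ≠ u)
    (hS1T : ∀ a ∈ S1.support, (a ∈ P.support ∨ a ∈ Q.support) → a = s) :
    ∃ p : G.Walk x u, ∃ q : G.Walk x v, p.IsPath ∧ q.IsPath ∧
      ∀ a ∈ p.support, a ∈ q.support → a = x := by
  refine ⟨Q, (P.takeUntil s hsP).append S1.reverse, hQ, ?_, ?_⟩
  · apply AP_append_isPath (hP.takeUntil hsP) hS1.reverse
    intro y hyt hyr
    rw [Walk.support_reverse, List.mem_reverse] at hyr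
    exact hS1T y hyr (Or.inl (Walk.support_takeUntil_subset _ _ hyt))
  · intro a haQ haq
    rw [Walk.mem_support_append_iff] at haq
    rcases haq with hat | har
    · have haP := Walk.support_takeUntil_subset _ _ hat
      rcases hPQ a haP haQ with rfl | rfl
      · rfl
      · exact absurd hat (AP_not_end_mem_takeUntil hP hsP hsu)
    · rw [Walk.support_reverse, List.mem_reverse] at har
      have has : a = s := hS1T a har (Or.inr haQ)
      subst has
      rcases hPQ a hsP haQ with h | h
      · exact h
      · exact absurd h hsu

lemma AP_fan {u v : V} (hG2 : ∀ s t : V, s ≠ t → TwoInternallyDisjointPaths G s t)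
    (huv : u ≠ v) (x : V) :
    ∃ p : G.Walk x u, ∃ q : G.Walk x v, p.IsPath ∧ q.IsPath ∧
      ∀ a ∈ p.support, a ∈ q.support → a = x := by
  classical
  by_cases hxu : x = u
  · subst hxu
    obtain ⟨q, _, hq, _, _, _⟩ := hG2 x v huv
    refine ⟨Walk.nil, q, Walk.IsPath.nil, hq, ?_⟩
    intro a ha _
    simpa using ha
  · by_cases hxv : x = v
    · subst hxv
      obtain ⟨p, _, hp, _, _, _⟩ := hG2 x u hxu
      refine ⟨p, Walk.nil, hp, Walk.IsPath.nil, ?_⟩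
      intro a _ ha
      simpa using ha
    · obtain ⟨P, Q, hP, hQ, _, hPQ⟩ := hG2 x u hxu
      have hQP : ∀ a ∈ Q.support, a ∈ P.support → a = x ∨ a = u := fun a h1 h2 => hPQ a h2 h1
      by_cases hvP : v ∈ P.support
      · refine ⟨Q, P.takeUntil v hvP, hQ, hP.takeUntil hvP, ?_⟩
        intro a haQ hat
        have haP := Walk.support_takeUntil_subset _ _ hat
        rcases hPQ a haP haQ with rfl | rfl
        · rfl
        · exact absurd hat (AP_not_end_mem_takeUntil hP hvP (Ne.symm huv))
      · by_cases hvQ : v ∈ Q.support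
        · refine ⟨P, Q.takeUntil v hvQ, hP, hQ.takeUntil hvQ, ?_⟩
          intro a haP hat
          have haQ := Walk.support_takeUntil_subset _ _ hat
          rcases hPQ a haP haQ with rfl | rfl
          · rfl
          · exact absurd hat (AP_not_end_mem_takeUntil hQ hvQ (Ne.symm huv))
        · obtain ⟨R, S, hR, hS, _, hRS⟩ := hG2 v x (fun h => hxv h.symm)
          have hTv : ¬ (v ∈ P.support ∨ v ∈ Q.support) := fun h => h.elim hvP hvQ
          have hTx : x ∈ P.support ∨ x ∈ Q.support := Or.inl P.start_mem_support
          obtain ⟨r, hr, R1, hR1, hR1sub, hR1last⟩ :=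
            AP_exists_prefix (fun a => a ∈ P.support ∨ a ∈ Q.support) hTx R hR hTv
          obtain ⟨s, hs, S1, hS1, hS1sub, hS1last⟩ :=
            AP_exists_prefix (fun a => a ∈ P.support ∨ a ∈ Q.support) hTx S hS hTv
          have hrsne : ¬(r = u ∧ s = u) := by
            rintro ⟨h1, h2⟩
            have hu1 : u ∈ R.support := h1 ▸ hR1sub _ R1.end_mem_support
            have hu2 : u ∈ S.support := h2 ▸ hS1sub _ S1.end_mem_support
            rcases hRS u hu1 hu2 with h | h
            · exact huv h
            · exact hxu h.symm
          by_cases hsu : s = u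
          · have hru : r ≠ u := fun h => hrsne ⟨h, hsu⟩
            rcases hr with h | h
            · exact AP_fan_step hP hQ hPQ hR1 h hru hR1last
            · exact AP_fan_step hQ hP hQP hR1 h hru
                (fun a ha hm => hR1last a ha (Or.symm hm))
          · rcases hs with h | h
            · exact AP_fan_step hP hQ hPQ hS1 h hsu hS1last
            · exact AP_fan_step hQ hP hQP hS1 h hsu
                (fun a ha hm => hS1last a ha (Or.symm hm))

end WalkLemmas

section AddPathBasic

variable {V : Type*} (G : SimpleGraph V) (u v : V) (n : ℕ)

lemma AP_adj_inl {x y : V} (h : G.Adj x y) :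
    (AddPath G u v n).Adj (Sum.inl x) (Sum.inl y) := by
  simp only [AddPath, SimpleGraph.fromRel_adj]
  exact ⟨by simp [h.ne], Or.inl (Or.inl ⟨x, y, rfl, rfl, h⟩)⟩

lemma AP_adj_u0 (i : Fin n) (hi : (i : ℕ) = 0) :
    (AddPath G u v n).Adj (Sum.inl u) (Sum.inr i) := by
  simp only [AddPath, SimpleGraph.fromRel_adj]
  exact ⟨by simp, Or.inl (Or.inr (Or.inr (Or.inl ⟨i, hi, trivial, rfl⟩)))⟩

lemma AP_adj_last (i : Fin n) (hi : (i : ℕ) = n - 1) :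
    (AddPath G u v n).Adj (Sum.inr i) (Sum.inl v) := by
  simp only [AddPath, SimpleGraph.fromRel_adj]
  exact ⟨by simp, Or.inl (Or.inr (Or.inr (Or.inr (Or.inl ⟨i, hi, rfl, trivial⟩))))⟩

lemma AP_adj_succ (i j : Fin n) (hij : (j : ℕ) = (i : ℕ) + 1) :
    (AddPath G u v n).Adj (Sum.inr i) (Sum.inr j) := by
  simp only [AddPath, SimpleGraph.fromRel_adj]
  refine ⟨?_, Or.inl (Or.inr (Or.inr (Or.inr (Or.inr ⟨i, j, hij, rfl, rfl⟩))))⟩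
  simp only [ne_eq, Sum.inr.injEq]
  intro h
  rw [h] at hij
  omega

def rideAux (j : Fin n) : (gas k : ℕ) → (hk : k < n) → (k + gas = (j : ℕ)) →
    (AddPath G u v n).Walk (Sum.inr ⟨k, hk⟩) (Sum.inr j)
  | 0, k, hk, hg =>
    (Walk.nil : (AddPath G u v n).Walk (Sum.inr j) (Sum.inr j)).copy
      (by rw [show j = (⟨k, hk⟩ : Fin n) from Fin.ext (show (j : ℕ) = k by omega)]) rfl
  | gas + 1, k, hk, hg =>
    Walk.cons (AP_adj_succ G u v n ⟨k, hk⟩ ⟨k + 1, by have := j.isLt; omega⟩ rfl)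
      (rideAux j gas (k + 1) (by have := j.isLt; omega) (by omega))

lemma rideAux_support (j : Fin n) :
    ∀ (gas k : ℕ) (hk : k < n) (hg : k + gas = (j : ℕ)),
      ∀ a ∈ (rideAux G u v n j gas k hk hg).support,
        ∃ m : Fin n, k ≤ (m : ℕ) ∧ (m : ℕ) ≤ (j : ℕ) ∧ a = Sum.inr m
  | 0, k, hk, hg => by
    intro a ha
    rw [rideAux] at ha
    simp only [Walk.support_copy, Walk.support_nil, List.mem_singleton] at ha
    exact ⟨j, by omega, le_refl _, ha⟩
  | gas + 1, k, hk, hg => by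
    intro a ha
    rw [rideAux, Walk.support_cons, List.mem_cons] at ha
    rcases ha with rfl | ha
    · exact ⟨⟨k, hk⟩, le_refl _, by simp; omega, rfl⟩
    · obtain ⟨m, h1, h2, h3⟩ := rideAux_support j gas (k + 1) _ _ a ha
      exact ⟨m, by omega, h2, h3⟩

lemma rideAux_isPath (j : Fin n) :
    ∀ (gas k : ℕ) (hk : k < n) (hg : k + gas = (j : ℕ)),
      (rideAux G u v n j gas k hk hg).IsPath
  | 0, k, hk, hg => by
    rw [rideAux]
    simp [Walk.isPath_copy]
  | gas + 1, k, hk, hg => by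
    rw [rideAux, Walk.cons_isPath_iff]
    refine ⟨rideAux_isPath j gas (k + 1) _ _, fun hmem => ?_⟩
    obtain ⟨m, h1, h2, h3⟩ := rideAux_support G u v n j gas (k + 1) _ _ _ hmem
    rw [Sum.inr.injEq] at h3
    have h5 : k = (m : ℕ) := congrArg Fin.val h3
    omega

lemma rideAux_edges (j : Fin n) :
    ∀ (gas k : ℕ) (hk : k < n) (hg : k + gas = (j : ℕ)),
      ∀ e ∈ (rideAux G u v n j gas k hk hg).edges,
        ∃ m m' : Fin n, (m' : ℕ) = (m : ℕ) + 1 ∧ k ≤ (m : ℕ) ∧ (m' : ℕ) ≤ (j : ℕ) ∧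
          e = s(Sum.inr m, Sum.inr m')
  | 0, k, hk, hg => by
    intro e he
    rw [rideAux] at he
    simp [Walk.edges_copy] at he
  | gas + 1, k, hk, hg => by
    intro e he
    rw [rideAux, Walk.edges_cons, List.mem_cons] at he
    rcases he with rfl | he
    · exact ⟨⟨k, hk⟩, ⟨k + 1, by have := j.isLt; omega⟩, rfl, le_refl _, by simp; omega, rfl⟩
    · obtain ⟨m, m', h1, h2, h3, h4⟩ := rideAux_edges j gas (k + 1) _ _ e he
      exact ⟨m, m', h1, by omega, h3, h4⟩

def climb (i : Fin n) : (AddPath G u v n).Walk (Sum.inl u) (Sum.inr i) :=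
  Walk.cons (AP_adj_u0 G u v n ⟨0, i.pos⟩ rfl)
    (rideAux G u v n i (i : ℕ) 0 i.pos (by omega))

def desc (i : Fin n) : (AddPath G u v n).Walk (Sum.inr i) (Sum.inl v) :=
  (rideAux G u v n ⟨n - 1, by have := i.pos; omega⟩ (n - 1 - (i : ℕ)) (i : ℕ) i.isLt
      (by have := i.isLt; simp; omega)).concat
    (AP_adj_last G u v n ⟨n - 1, by have := i.pos; omega⟩ rfl)

lemma climb_support (i : Fin n) :
    ∀ a ∈ (climb G u v n i).support,
      a = Sum.inl u ∨ ∃ m : Fin n, (m : ℕ) ≤ (i : ℕ) ∧ a = Sum.inr m := by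
  intro a ha
  rw [climb, Walk.support_cons, List.mem_cons] at ha
  rcases ha with rfl | ha
  · exact Or.inl rfl
  · obtain ⟨m, _, h2, h3⟩ := rideAux_support G u v n i _ _ _ _ a ha
    exact Or.inr ⟨m, h2, h3⟩

lemma climb_isPath (i : Fin n) : (climb G u v n i).IsPath := by
  rw [climb, Walk.cons_isPath_iff]
  refine ⟨rideAux_isPath G u v n i _ _ _ _, fun hmem => ?_⟩
  obtain ⟨m, _, _, h3⟩ := rideAux_support G u v n i _ _ _ _ _ hmem
  exact Sum.inl_ne_inr h3

lemma climb_edges (i : Fin n) :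
    ∀ e ∈ (climb G u v n i).edges,
      (∃ m : Fin n, (m : ℕ) = 0 ∧ e = s(Sum.inl u, Sum.inr m)) ∨
      ∃ m m' : Fin n, (m' : ℕ) = (m : ℕ) + 1 ∧ (m' : ℕ) ≤ (i : ℕ) ∧
        e = s(Sum.inr m, Sum.inr m') := by
  intro e he
  rw [climb, Walk.edges_cons, List.mem_cons] at he
  rcases he with rfl | he
  · exact Or.inl ⟨⟨0, i.pos⟩, rfl, rfl⟩
  · obtain ⟨m, m', h1, _, h3, h4⟩ := rideAux_edges G u v n i _ _ _ _ e he
    exact Or.inr ⟨m, m', h1, h3, h4⟩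

lemma desc_support (i : Fin n) :
    ∀ a ∈ (desc G u v n i).support,
      a = Sum.inl v ∨ ∃ m : Fin n, (i : ℕ) ≤ (m : ℕ) ∧ a = Sum.inr m := by
  intro a ha
  rw [desc, Walk.support_concat, List.mem_append] at ha
  rcases ha with ha | ha
  · obtain ⟨m, h1, _, h3⟩ := rideAux_support G u v n _ _ _ _ _ a ha
    exact Or.inr ⟨m, h1, h3⟩
  · exact Or.inl (List.mem_singleton.mp ha)

lemma desc_isPath (i : Fin n) : (desc G u v n i).IsPath := by
  rw [Walk.isPath_def, desc, Walk.support_concat, List.nodup_append]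
  refine ⟨(rideAux_isPath G u v n _ _ _ _ _).support_nodup, List.nodup_singleton _, ?_⟩
  intro a ha b ha' hab
  rw [List.mem_singleton] at ha'
  subst ha'; subst hab
  obtain ⟨m, _, _, h3⟩ := rideAux_support G u v n _ _ _ _ _ _ ha
  exact Sum.inl_ne_inr h3

lemma desc_edges (i : Fin n) :
    ∀ e ∈ (desc G u v n i).edges,
      (∃ m m' : Fin n, (m' : ℕ) = (m : ℕ) + 1 ∧ (i : ℕ) ≤ (m : ℕ) ∧
        e = s(Sum.inr m, Sum.inr m')) ∨
      ∃ m : Fin n, (m : ℕ) = n - 1 ∧ e = s(Sum.inr m, Sum.inl v) := by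
  intro e he
  rw [desc, Walk.edges_concat, List.concat_eq_append, List.mem_append] at he
  rcases he with he | he
  · obtain ⟨m, m', h1, h2, _, h4⟩ := rideAux_edges G u v n _ _ _ _ _ e he
    exact Or.inl ⟨m, m', h1, h2, h4⟩
  · exact Or.inr ⟨⟨n - 1, by have := i.pos; omega⟩, rfl, List.mem_singleton.mp he⟩

def homInl : G →g AddPath G u v n :=
  ⟨Sum.inl, fun h => AP_adj_inl G u v n h⟩

lemma homInl_coe : ⇑(homInl G u v n) = Sum.inl := rfl

end AddPathBasic

section Cases

variable {V : Type*} {G : SimpleGraph V}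

lemma AP_mapInl_no_inr {n : ℕ} (e1 : Sym2 V) (m : Fin n)
    (hmem : (Sum.inr m : V ⊕ Fin n) ∈ Sym2.map Sum.inl e1) : False := by
  rw [Sym2.mem_map] at hmem
  obtain ⟨c, _, hc⟩ := hmem
  exact Sum.inl_ne_inr hc

lemma AP_caseA (u : V) (v : V) (n : ℕ) {x y : V}
    (h : TwoInternallyDisjointPaths G x y) :
    TwoInternallyDisjointPaths (AddPath G u v n) (Sum.inl x) (Sum.inl y) := by
  obtain ⟨p, q, hp, hq, he, hv'⟩ := h
  have hinj : Function.Injective (homInl G u v n) := Sum.inl_injective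
  refine ⟨p.map (homInl G u v n), q.map (homInl G u v n),
    Walk.map_isPath_of_injective hinj hp, Walk.map_isPath_of_injective hinj hq, ?_, ?_⟩
  · intro e hep heq
    erw [Walk.edges_map, List.mem_map] at hep heq
    obtain ⟨e1, he1, rfl⟩ := hep
    obtain ⟨e2, he2, heq2⟩ := heq
    have he12 : e2 = e1 := Sym2.map.injective hinj heq2
    exact he e1 he1 (he12 ▸ he2)
  · intro a hap haq
    erw [Walk.support_map, List.mem_map] at hap haq
    obtain ⟨c, hc, rfl⟩ := hap
    obtain ⟨d, hd, hcd⟩ := haq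
    have hdc : d = c := Sum.inl_injective hcd
    rcases hv' c hc (hdc ▸ hd) with rfl | rfl
    · exact Or.inl rfl
    · exact Or.inr rfl

lemma AP_caseB (u v : V) (n : ℕ)
    (hG2 : ∀ s t : V, s ≠ t → TwoInternallyDisjointPaths G s t)
    (huv : u ≠ v) (x : V) (i : Fin n) :
    TwoInternallyDisjointPaths (AddPath G u v n) (Sum.inl x) (Sum.inr i) := by
  obtain ⟨p, q, hp, hq, hshare⟩ := AP_fan hG2 huv x
  have hinj : Function.Injective (homInl G u v n) := Sum.inl_injective
  have hP1sup : ∀ a ∈ ((p.map (homInl G u v n)).append (climb G u v n i)).support,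
      (∃ c ∈ p.support, a = Sum.inl c) ∨ ∃ m : Fin n, (m : ℕ) ≤ (i : ℕ) ∧ a = Sum.inr m := by
    intro a ha
    erw [Walk.mem_support_append_iff] at ha
    rcases ha with ha | ha
    · erw [Walk.support_map, List.mem_map] at ha
      obtain ⟨c, hc, rfl⟩ := ha
      exact Or.inl ⟨c, hc, rfl⟩
    · rcases climb_support G u v n i a ha with rfl | ⟨m, hm, rfl⟩
      · exact Or.inl ⟨u, p.end_mem_support, rfl⟩
      · exact Or.inr ⟨m, hm, rfl⟩
  have hP2sup : ∀ a ∈ ((q.map (homInl G u v n)).append (desc G u v n i).reverse).support,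
      (∃ c ∈ q.support, a = Sum.inl c) ∨ ∃ m : Fin n, (i : ℕ) ≤ (m : ℕ) ∧ a = Sum.inr m := by
    intro a ha
    erw [Walk.mem_support_append_iff] at ha
    rcases ha with ha | ha
    · erw [Walk.support_map, List.mem_map] at ha
      obtain ⟨c, hc, rfl⟩ := ha
      exact Or.inl ⟨c, hc, rfl⟩
    · erw [Walk.support_reverse, List.mem_reverse] at ha
      rcases desc_support G u v n i a ha with rfl | ⟨m, hm, rfl⟩
      · exact Or.inl ⟨v, q.end_mem_support, rfl⟩
      · exact Or.inr ⟨m, hm, rfl⟩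
  refine ⟨(p.map (homInl G u v n)).append (climb G u v n i),
          (q.map (homInl G u v n)).append ((desc G u v n i).reverse), ?_, ?_, ?_, ?_⟩
  · apply AP_append_isPath (Walk.map_isPath_of_injective hinj hp) (climb_isPath G u v n i)
    intro y hy1 hy2
    erw [Walk.support_map, List.mem_map] at hy1
    obtain ⟨c, hc, rfl⟩ := hy1
    rcases climb_support G u v n i _ hy2 with h | ⟨m, _, h⟩
    · exact h
    · exact absurd h Sum.inl_ne_inr
  · apply AP_append_isPath (Walk.map_isPath_of_injective hinj hq) (desc_isPath G u v n i).reverse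
    intro y hy1 hy2
    erw [Walk.support_map, List.mem_map] at hy1
    obtain ⟨c, hc, rfl⟩ := hy1
    erw [Walk.support_reverse, List.mem_reverse] at hy2
    rcases desc_support G u v n i _ hy2 with h | ⟨m, _, h⟩
    · exact h
    · exact absurd h Sum.inl_ne_inr
  · intro e he1 he2
    erw [Walk.edges_append, List.mem_append] at he1 he2
    rcases he1 with h1 | h1
    · erw [Walk.edges_map, List.mem_map] at h1
      obtain ⟨e1, he1', rfl⟩ := h1
      rcases he2 with h2 | h2
      · erw [Walk.edges_map, List.mem_map] at h2
        obtain ⟨e2, he2', heq⟩ := h2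
        have he12 : e2 = e1 := Sym2.map.injective hinj heq
        subst he12
        revert he1' he2'
        induction e2 using Sym2.ind with
        | _ a b =>
          intro he2' he1'
          have hadj : G.Adj a b := G.mem_edgeSet.mp (p.edges_subset_edgeSet he1')
          have ha := hshare a (p.fst_mem_support_of_mem_edges he1')
            (q.fst_mem_support_of_mem_edges he2')
          have hb := hshare b (p.snd_mem_support_of_mem_edges he1')
            (q.snd_mem_support_of_mem_edges he2')
          rw [ha, hb] at hadj
          exact G.irrefl hadj
      · erw [Walk.edges_reverse, List.mem_reverse] at h2
        rcases desc_edges G u v n i _ h2 with ⟨m, m', _, _, heq⟩ | ⟨m, _, heq⟩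
        · exact AP_mapInl_no_inr e1 m (by rw [homInl_coe] at heq; rw [heq]; exact Sym2.mem_mk_left _ _)
        · exact AP_mapInl_no_inr e1 m (by rw [homInl_coe] at heq; rw [heq]; exact Sym2.mem_mk_left _ _)
    · rcases he2 with h2 | h2
      · erw [Walk.edges_map, List.mem_map] at h2
        obtain ⟨e2, he2', rfl⟩ := h2
        rcases climb_edges G u v n i _ h1 with ⟨m, _, heq⟩ | ⟨m, m', _, _, heq⟩
        · exact AP_mapInl_no_inr e2 m (by rw [homInl_coe] at heq; rw [heq]; exact Sym2.mem_mk_right _ _)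
        · exact AP_mapInl_no_inr e2 m (by rw [homInl_coe] at heq; rw [heq]; exact Sym2.mem_mk_left _ _)
      · erw [Walk.edges_reverse, List.mem_reverse] at h2
        rcases climb_edges G u v n i _ h1 with ⟨m0, hm0, rfl⟩ | ⟨m, m', hm1, hm2, rfl⟩ <;>
          rcases desc_edges G u v n i _ h2 with ⟨a, a', ha1, ha2, heq⟩ | ⟨a, ha, heq⟩
        · simp [Sym2.eq_iff] at heq
        · simp only [Sym2.eq_iff, Sum.inl.injEq, Sum.inr.injEq] at heq
          rcases heq with ⟨h1', h2'⟩ | ⟨h1', h2'⟩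
          · exact Sum.inl_ne_inr h1'
          · exact huv h1'
        · simp only [Sym2.eq_iff, Sum.inr.injEq, Fin.ext_iff] at heq
          omega
        · simp [Sym2.eq_iff] at heq
  · intro a ha1 ha2
    rcases hP1sup a ha1 with ⟨c, hc, rfl⟩ | ⟨m, hm, rfl⟩
    · rcases hP2sup _ ha2 with ⟨d, hd, hcd⟩ | ⟨m, _, h⟩
      · have hcd' : c = d := Sum.inl_injective hcd
        have hcx := hshare c hc (hcd' ▸ hd)
        exact Or.inl (by rw [hcx])
      · exact absurd h Sum.inl_ne_inr
    · rcases hP2sup _ ha2 with ⟨d, hd, h⟩ | ⟨m', hm', h⟩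
      · exact absurd h Sum.inr_ne_inl
      · have hmm : (m : ℕ) = (m' : ℕ) := congrArg Fin.val (Sum.inr_injective h)
        exact Or.inr (by rw [show m = i from Fin.ext (by omega)])

lemma AP_caseC (u v : V) (n : ℕ) {w : G.Walk u v} (hw : w.IsPath) (huv : u ≠ v)
    (i j : Fin n) (hij : (i : ℕ) < (j : ℕ)) :
    TwoInternallyDisjointPaths (AddPath G u v n) (Sum.inr i) (Sum.inr j) := by
  have hinj : Function.Injective (homInl G u v n) := Sum.inl_injective
  set P1 : (AddPath G u v n).Walk (Sum.inr i) (Sum.inr j) :=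
    rideAux G u v n j ((j : ℕ) - (i : ℕ)) (i : ℕ) i.isLt (by omega) with hP1
  set P2 : (AddPath G u v n).Walk (Sum.inr i) (Sum.inr j) :=
    (climb G u v n i).reverse.append ((w.map (homInl G u v n)).append (desc G u v n j).reverse)
    with hP2
  have hP2sup : ∀ a ∈ P2.support,
      (∃ m : Fin n, (m : ℕ) ≤ (i : ℕ) ∧ a = Sum.inr m) ∨ (∃ c ∈ w.support, a = Sum.inl c) ∨
      (∃ m : Fin n, (j : ℕ) ≤ (m : ℕ) ∧ a = Sum.inr m) := by
    intro a ha
    erw [hP2, Walk.mem_support_append_iff, Walk.mem_support_append_iff,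
      Walk.support_reverse, Walk.support_reverse, List.mem_reverse, List.mem_reverse] at ha
    rcases ha with ha | ha | ha
    · rcases climb_support G u v n i a ha with rfl | ⟨m, hm, rfl⟩
      · exact Or.inr (Or.inl ⟨u, w.start_mem_support, rfl⟩)
      · exact Or.inl ⟨m, hm, rfl⟩
    · erw [Walk.support_map, List.mem_map] at ha
      obtain ⟨c, hc, rfl⟩ := ha
      exact Or.inr (Or.inl ⟨c, hc, rfl⟩)
    · rcases desc_support G u v n j a ha with rfl | ⟨m, hm, rfl⟩
      · exact Or.inr (Or.inl ⟨v, w.end_mem_support, rfl⟩)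
      · exact Or.inr (Or.inr ⟨m, hm, rfl⟩)
  refine ⟨P1, P2, rideAux_isPath G u v n j _ _ _ _, ?_, ?_, ?_⟩
  · rw [hP2]
    apply AP_append_isPath (climb_isPath G u v n i).reverse
    · apply AP_append_isPath (Walk.map_isPath_of_injective hinj hw)
        (desc_isPath G u v n j).reverse
      intro y hy1 hy2
      erw [Walk.support_map, List.mem_map] at hy1
      obtain ⟨c, hc, rfl⟩ := hy1
      erw [Walk.support_reverse, List.mem_reverse] at hy2
      rcases desc_support G u v n j _ hy2 with h | ⟨m, _, h⟩
      · exact h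
      · exact absurd h Sum.inl_ne_inr
    · intro y hy1 hy2
      erw [Walk.support_reverse, List.mem_reverse] at hy1
      erw [Walk.mem_support_append_iff] at hy2
      rcases climb_support G u v n i _ hy1 with rfl | ⟨m, hm, rfl⟩
      · rfl
      · rcases hy2 with hy2 | hy2
        · erw [Walk.support_map, List.mem_map] at hy2
          obtain ⟨c, _, hc⟩ := hy2
          exact absurd hc Sum.inl_ne_inr
        · erw [Walk.support_reverse, List.mem_reverse] at hy2
          rcases desc_support G u v n j _ hy2 with h | ⟨m', hm', h⟩
          · exact absurd h Sum.inr_ne_inl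
          · have := congrArg Fin.val (Sum.inr_injective h)
            omega
  · intro e he1 he2
    obtain ⟨m, m', hm1, hm2, hm3, rfl⟩ := rideAux_edges G u v n j _ _ _ _ e he1
    erw [hP2, Walk.edges_append, Walk.edges_append, List.mem_append, List.mem_append,
      Walk.edges_reverse, List.mem_reverse] at he2
    rcases he2 with h2 | h2 | h2
    · rcases climb_edges G u v n i _ h2 with ⟨a, _, heq⟩ | ⟨a, a', ha1, ha2, heq⟩
      · simp [Sym2.eq_iff] at heq
      · simp only [Sym2.eq_iff, Sum.inr.injEq, Fin.ext_iff] at heq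
        omega
    · erw [Walk.edges_map, List.mem_map] at h2
      obtain ⟨e2, _, heq⟩ := h2
      exact AP_mapInl_no_inr e2 m (by rw [homInl_coe] at heq; rw [heq]; exact Sym2.mem_mk_left _ _)
    · erw [Walk.edges_reverse, List.mem_reverse] at h2
      rcases desc_edges G u v n j _ h2 with ⟨a, a', ha1, ha2, heq⟩ | ⟨a, _, heq⟩
      · simp only [Sym2.eq_iff, Sum.inr.injEq, Fin.ext_iff] at heq
        omega
      · simp [Sym2.eq_iff] at heq
  · intro a ha1 ha2
    obtain ⟨m, hm1, hm2, rfl⟩ := rideAux_support G u v n j _ _ _ _ a ha1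
    rcases hP2sup _ ha2 with ⟨m', hm', h⟩ | ⟨c, _, h⟩ | ⟨m', hm', h⟩
    · have := congrArg Fin.val (Sum.inr_injective h)
      exact Or.inl (by rw [show m = i from Fin.ext (by omega)])
    · exact absurd h Sum.inr_ne_inl
    · have := congrArg Fin.val (Sum.inr_injective h)
      exact Or.inr (by rw [show m = j from Fin.ext (by omega)])

end Cases

theorem addPath_twoConnected' {V : Type*} [Fintype V] (G : SimpleGraph V)
    (hG : 3 ≤ Fintype.card V ∧ ∀ s t : V, s ≠ t → TwoInternallyDisjointPaths G s t)
    (u v : V) (huv : u ≠ v) (n : ℕ) :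
    3 ≤ Fintype.card (V ⊕ Fin n) ∧
      ∀ s t : V ⊕ Fin n, s ≠ t → TwoInternallyDisjointPaths (AddPath G u v n) s t := by
  obtain ⟨hcard, hG2⟩ := hG
  constructor
  · rw [Fintype.card_sum, Fintype.card_fin]
    omega
  · rintro (x | i) (y | j) hst
    · exact AP_caseA u v n (hG2 x y (fun h => hst (congrArg Sum.inl h)))
    · exact AP_caseB u v n hG2 huv x j
    · exact AP_tidp_symm (AP_caseB u v n hG2 huv y i)
    · have hij : (i : ℕ) ≠ (j : ℕ) := fun h => hst (congrArg Sum.inr (Fin.ext h))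
      obtain ⟨w, _, hw, _, _, _⟩ := hG2 u v huv
      rcases lt_or_gt_of_ne hij with h | h
      · exact AP_caseC u v n hw huv i j h
      · exact AP_tidp_symm (AP_caseC u v n hw huv j i h)

/-- Adding a simple path between two distinct vertices `u, v` of a 2-connected graph `G`
(with new internal vertices not in `G`) results in a 2-connected graph. -/
theorem addPath_twoConnected {V : Type*} [Fintype V] (G : SimpleGraph V)
    (hG : TwoConnected G) (u v : V) (huv : u ≠ v) (n : ℕ) :
    TwoConnected (AddPath G u v n) := by
  exact addPath_twoConnected' G hG u v huv n
end

section
/- Let T be a tree, F an edge set on V(T), J = T ∪ F, and P the s-t path in T with |P| ≥ 3 edges, with last two edges uv and vt = e_t. If κ_J(s,t) ≥ 2 then κ_J(s,v) ≥ 2. -/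
open SimpleGraph

/-- Any walk can be split at the *last* vertex belonging to a set `S` that contains a
vertex of the walk. -/
private lemma exists_last_decomp {V : Type*} {G : SimpleGraph V} {a b : V}
    (Q : G.Walk a b) (S : Set V) (ha : ∃ z ∈ Q.support, z ∈ S) :
    ∃ (x : V) (Q₁ : G.Walk a x) (Q₂ : G.Walk x b),
      Q = Q₁.append Q₂ ∧ x ∈ S ∧ ∀ y ∈ Q₂.support.tail, y ∉ S := by
  classical
  induction Q with
  | nil =>
    obtain ⟨z, hz, hzS⟩ := ha
    rw [SimpleGraph.Walk.support_nil, List.mem_singleton] at hz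
    exact ⟨_, .nil, .nil, rfl, hz ▸ hzS, by simp⟩
  | @cons a c b hadj Q' ih =>
    by_cases hc : ∃ z ∈ Q'.support, z ∈ S
    · obtain ⟨x, Q₁, Q₂, hdec, hxS, htail⟩ := ih hc
      exact ⟨x, Walk.cons hadj Q₁, Q₂, by rw [Walk.cons_append, hdec], hxS, htail⟩
    · push_neg at hc
      obtain ⟨z, hz, hzS⟩ := ha
      simp only [SimpleGraph.Walk.support_cons, List.mem_cons] at hz
      rcases hz with rfl | hz
      · refine ⟨z, .nil, Walk.cons hadj Q', by simp, hzS, ?_⟩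
        intro y hy
        rw [Walk.support_cons] at hy
        exact hc y hy
      · exact absurd hzS (hc z hz)

/-- Main construction (asymmetric case: the split vertex lies on `p₁`). -/
private lemma main_case {V : Type*} {J : SimpleGraph V} {s t v : V}
    (p₁ p₂ : J.Walk s t) (hp₁ : p₁.IsPath) (hp₂ : p₂.IsPath)
    (hedge : ∀ e ∈ p₁.edges, e ∉ p₂.edges)
    (hvert : ∀ y ∈ p₁.support, y ∈ p₂.support → y = s ∨ y = t)
    (htv : J.Adj t v) (hvs : v ≠ s) (hvt : v ≠ t)
    {x : V} (hx1 : x ∈ p₁.support)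
    (Q₂ : J.Walk x v) (hQ₂ : Q₂.IsPath) (ht2 : t ∉ Q₂.support)
    (htail : ∀ y ∈ Q₂.support.tail, y ∉ p₁.support ∧ y ∉ p₂.support) :
    TwoInternallyDisjointPaths J s v := by
  classical
  set P₁ := p₁.takeUntil x hx1 with hP₁
  -- t is not on the prefix P₁
  have hxt : x ≠ t := fun hxt => ht2 (hxt ▸ Q₂.start_mem_support)
  have ht1 : t ∉ P₁.support := by
    intro ht1
    have hspec := p₁.take_spec hx1
    have hnd : p₁.support.Nodup := hp₁.support_nodup
    rw [← hspec, Walk.support_append] at hnd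
    have htD : t ∈ (p₁.dropUntil x hx1).support.tail := by
      have := (p₁.dropUntil x hx1).end_mem_support
      rw [Walk.support_eq_cons (p₁.dropUntil x hx1), List.mem_cons] at this
      rcases this with h' | h'
      · exact absurd h'.symm hxt
      · exact h'
    exact (List.disjoint_of_nodup_append hnd) ht1 htD
  -- v is not on p₂
  have hv2 : v ∉ p₂.support := by
    intro hv2
    by_cases hvx : v = x
    · subst hvx
      rcases hvert v hx1 hv2 with h' | h'
      · exact hvs h'
      · exact hvt h'
    · have : v ∈ Q₂.support.tail := by
        have := Q₂.end_mem_support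
        rw [Walk.support_eq_cons Q₂, List.mem_cons] at this
        rcases this with h' | h'
        · exact absurd h' hvx
        · exact h'
      exact (htail v this).2 hv2
  -- the two walks
  refine ⟨P₁.append Q₂, p₂.concat htv, ?_, ?_, ?_, ?_⟩
  · -- first is a path
    rw [Walk.isPath_def, Walk.support_append]
    refine List.Nodup.append (hp₁.takeUntil hx1).support_nodup
      hQ₂.support_nodup.tail ?_
    intro y hy hy'
    exact (htail y hy').1 (p₁.support_takeUntil_subset hx1 hy)
  · -- second is a path
    rw [Walk.isPath_def, Walk.support_concat]
    rw [List.nodup_append]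
    exact ⟨hp₂.support_nodup, List.nodup_singleton v,
      fun y hy b hy' => by
        rw [List.mem_singleton] at hy'; subst hy'; rintro rfl; exact hv2 hy⟩
  · -- edge disjoint
    intro e heA heB
    rw [Walk.edges_append, List.mem_append] at heA
    rw [Walk.edges_concat, List.concat_eq_append, List.mem_append,
      List.mem_singleton] at heB
    rcases heB with heB | rfl
    · rcases heA with heA | heA
      · exact hedge e (p₁.edges_takeUntil_subset hx1 heA) heB
      · -- e ∈ Q₂.edges and e ∈ p₂.edges : impossible
        induction e using Sym2.ind with
        | _ y z =>
          have hyz : y ≠ z := (Q₂.adj_of_mem_edges heA).ne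
          have hy2 : y ∈ Q₂.support := Q₂.fst_mem_support_of_mem_edges heA
          have hz2 : z ∈ Q₂.support := Q₂.snd_mem_support_of_mem_edges heA
          have hyp : y ∈ p₂.support := p₂.fst_mem_support_of_mem_edges heB
          have hzp : z ∈ p₂.support := p₂.snd_mem_support_of_mem_edges heB
          rw [Walk.support_eq_cons Q₂, List.mem_cons] at hy2 hz2
          rcases hy2 with rfl | hy2
          · rcases hz2 with rfl | hz2
            · exact hyz rfl
            · exact (htail z hz2).2 hzp
          · exact (htail y hy2).2 hyp
    · rcases heA with heA | heA
      · exact ht1 (P₁.fst_mem_support_of_mem_edges heA)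
      · exact ht2 (Q₂.fst_mem_support_of_mem_edges heA)
  · -- internally vertex disjoint
    intro y hyA hyB
    rw [Walk.support_concat, List.mem_append,
      List.mem_singleton] at hyB
    rcases hyB with hyB | rfl
    · rw [Walk.support_append, List.mem_append] at hyA
      rcases hyA with hyA | hyA
      · rcases hvert y (p₁.support_takeUntil_subset hx1 hyA) hyB with h' | h'
        · exact Or.inl h'
        · exact absurd (h' ▸ hyA) ht1
      · exact absurd hyB (htail y hyA).2
    · exact Or.inr rfl

/-- Let `T` be a tree, `F` an edge set on `V(T)`, `J = T ∪ F`, and let the `s`-`t` path in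
`T` have at least `3` edges, its last two edges being `uv` and `vt`. If `κ_J(s,t) ≥ 2` then
`κ_J(s,v) ≥ 2`. -/
theorem kappa_st_implies_kappa_sv {V : Type*} (T F : SimpleGraph V) (hT : T.IsTree)
    (s t u v : V) (q : T.Walk s u) (huv : T.Adj u v) (hvt : T.Adj v t)
    (hpath : ((q.concat huv).concat hvt).IsPath)
    (hlen : 3 ≤ ((q.concat huv).concat hvt).length)
    (h : TwoInternallyDisjointPaths (T ⊔ F) s t) :
    TwoInternallyDisjointPaths (T ⊔ F) s v := by
  classical
  obtain ⟨p₁, p₂, hp₁, hp₂, hedge, hvert⟩ := h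
  -- basic facts from the tree path being a path
  have hPsup : ((q.concat huv).concat hvt).support
      = (q.concat huv).support ++ [t] := by
    rw [Walk.support_concat]
  have hndP : ((q.concat huv).concat hvt).support.Nodup := hpath.support_nodup
  rw [hPsup, List.nodup_append] at hndP
  have htQ : t ∉ (q.concat huv).support := fun ht =>
    hndP.2.2 t ht t (List.mem_singleton_self t) rfl
  have hvt' : v ≠ t := fun hv => htQ (hv ▸ (q.concat huv).end_mem_support)
  have hQpath : (q.concat huv).IsPath := by
    have h' := hpath
    rw [Walk.concat_eq_append] at h'
    exact h'.of_append_left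
  have hvs : v ≠ s := by
    intro hv
    subst hv
    have hnil := (Walk.isPath_iff_eq_nil).mp hQpath
    have hl := congrArg Walk.length hnil
    rw [Walk.concat_eq_append, Walk.length_append] at hl
    simp at hl
  -- the tree path from s to v, inside J
  set Q : (T ⊔ F).Walk s v := (q.concat huv).mapLe le_sup_left with hQdef
  have hQsup : Q.support = (q.concat huv).support := by
    have hid : ⇑(Hom.ofLE (le_sup_left : T ≤ T ⊔ F)) = id := rfl
    rw [hQdef, Walk.mapLe, Walk.support_map, hid, List.map_id]
  have hQJ : Q.IsPath := hQpath.mapLe _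
  -- split Q at the last vertex on p₁ ∪ p₂
  obtain ⟨x, Q₁, Q₂, hdec, hxS, htail⟩ := exists_last_decomp Q
    {y | y ∈ p₁.support ∨ y ∈ p₂.support}
    ⟨s, Q.start_mem_support, Or.inl p₁.start_mem_support⟩
  have hQ₂ : Q₂.IsPath := by
    rw [hdec] at hQJ
    exact hQJ.of_append_right
  have ht2 : t ∉ Q₂.support := by
    intro ht
    apply htQ
    rw [← hQsup, hdec]
    exact Walk.subset_support_append_right _ _ ht
  have htail' : ∀ y ∈ Q₂.support.tail, y ∉ p₁.support ∧ y ∉ p₂.support := by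
    intro y hy
    have h' := htail y hy
    simp only [Set.mem_setOf_eq, not_or] at h'
    exact h'
  have hadjJ : (T ⊔ F).Adj t v := by
    simp [hvt.symm]
  rcases hxS with hx1 | hx2
  · exact main_case p₁ p₂ hp₁ hp₂ hedge hvert hadjJ hvs hvt' hx1 Q₂ hQ₂ ht2 htail'
  · exact main_case p₂ p₁ hp₂ hp₁ (fun e h2 h1 => hedge e h1 h2)
      (fun y h2 h1 => hvert y h1 h2) hadjJ hvs hvt' hx2 Q₂ hQ₂ ht2
      (fun y hy => ⟨(htail' y hy).2, (htail' y hy).1⟩)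
end

section
/- Let T be a tree, F an edge set on V(T), and let P be the s-t path in T with |P| ≥ 3 edges, whose last two edges are uv and vt = e_t. Let H be the (F,E_T)-incidence graph. If H contains a path from e_s to e_t, then there exists f ∈ F on this path such that f is adjacent in H to the vertex uv (i.e., uv is an edge of T_f). -/
open SimpleGraph

/-- The edge `e` lies on the (unique, when `T` is a tree) path in `T` between `x` and `y`. -/
def OnTreePathEdge {V : Type*} (T : SimpleGraph V) (x y : V) (e : Sym2 V) : Prop :=
  ∃ p : T.Walk x y, p.IsPath ∧ e ∈ p.edges

/-- The `(F,E_T)`-incidence graph: its vertices are `Sym2 V ⊕ Sym2 V` (edges of `T` on the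
left, edges of `F` on the right), and a tree edge `e` is adjacent to an edge `f` of `F` iff
`e` lies on the tree path `T_f` between the endpoints of `f`. -/
def IncET {V : Type*} (T F : SimpleGraph V) : SimpleGraph (Sym2 V ⊕ Sym2 V) :=
  SimpleGraph.fromRel (fun a b =>
    ∃ e f, a = Sum.inl e ∧ b = Sum.inr f ∧ e ∈ T.edgeSet ∧ f ∈ F.edgeSet ∧
      ∃ x y, f = s(x, y) ∧ OnTreePathEdge T x y e)

lemma IncET_adj_elim {V : Type*} {T F : SimpleGraph V} {e f : Sym2 V}
    (h : (IncET T F).Adj (Sum.inl e) (Sum.inr f)) :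
    e ∈ T.edgeSet ∧ f ∈ F.edgeSet ∧ ∃ x y, f = s(x, y) ∧ OnTreePathEdge T x y e := by
  rw [IncET, fromRel_adj] at h
  obtain ⟨-, h | h⟩ := h
  · obtain ⟨e', f', he, hf, h1, h2, h3⟩ := h
    rw [Sum.inl.injEq] at he
    rw [Sum.inr.injEq] at hf
    subst he; subst hf
    exact ⟨h1, h2, h3⟩
  · obtain ⟨e', f', he, hf, -⟩ := h
    exact absurd hf (by simp)

lemma IncET_not_inl_inl {V : Type*} {T F : SimpleGraph V} {e e' : Sym2 V} :
    ¬ (IncET T F).Adj (Sum.inl e) (Sum.inl e') := by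
  rw [IncET, fromRel_adj]
  rintro ⟨-, h | h⟩ <;> obtain ⟨a, b, h1, h2, -⟩ := h <;> simp at h1 h2

lemma IncET_not_inr_inr {V : Type*} {T F : SimpleGraph V} {f f' : Sym2 V} :
    ¬ (IncET T F).Adj (Sum.inr f) (Sum.inr f') := by
  rw [IncET, fromRel_adj]
  rintro ⟨-, h | h⟩ <;> obtain ⟨a, b, h1, h2, -⟩ := h <;> simp at h1 h2

lemma IncET_key {V : Type*} {T F : SimpleGraph V} (N : Sym2 V → Prop) (uv : Sym2 V)
    (hprop : ∀ e f e', (IncET T F).Adj (Sum.inl e) (Sum.inr f) →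
      (IncET T F).Adj (Sum.inr f) (Sum.inl e') →
      ¬(∃ x y, f = s(x, y) ∧ OnTreePathEdge T x y uv) → N e → N e')
    {et : Sym2 V} (hend : ¬ N et) :
    ∀ (a c : Sym2 V ⊕ Sym2 V) (w : (IncET T F).Walk a c), c = Sum.inl et →
      (∀ e, a = Sum.inl e → N e) →
      (∀ f, a = Sum.inr f → (∃ x y, f = s(x, y) ∧ OnTreePathEdge T x y uv) ∨
          ∀ e', (IncET T F).Adj (Sum.inr f) (Sum.inl e') → N e') →
      ∃ f, Sum.inr f ∈ w.support ∧ f ∈ F.edgeSet ∧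
        ∃ x y, f = s(x, y) ∧ OnTreePathEdge T x y uv := by
  intro a c w
  induction w with
  | nil => exact fun hc h1 _ => absurd (h1 et hc) hend
  | @cons a b _ h w' ih =>
    intro hc h1 h2
    match a, b with
    | Sum.inl e, Sum.inl e' => exact absurd h IncET_not_inl_inl
    | Sum.inr f, Sum.inr f' => exact absurd h IncET_not_inr_inr
    | Sum.inl e, Sum.inr f =>
      by_cases htgt : ∃ x y, f = s(x, y) ∧ OnTreePathEdge T x y uv
      · exact ⟨f, by simp, (IncET_adj_elim h).2.1, htgt⟩
      · obtain ⟨f', hf', hrest⟩ := ih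
            hc
          (by rintro e' ⟨⟩)
          (by intro f'' heq; injection heq with heq; subst heq
              exact Or.inr fun e' h' => hprop e _ e' h h' htgt (h1 e rfl))
        exact ⟨f', by simp [hf'], hrest⟩
    | Sum.inr f, Sum.inl e' =>
      rcases h2 f rfl with htgt | hN
      · exact ⟨f, by simp, (IncET_adj_elim h.symm).2.1, htgt⟩
      · obtain ⟨f', hf', hrest⟩ := ih
          hc
          (by intro e'' heq; injection heq with heq; subst heq; exact hN _ h)
          (by rintro f'' ⟨⟩)
        exact ⟨f', by simp [hf'], hrest⟩

lemma mem_support_of_mem_edges'' {V : Type*} {G : SimpleGraph V} {a b : V} {p : G.Walk a b}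
    {e : Sym2 V} (he : e ∈ p.edges) {x : V} (hx : x ∈ e) : x ∈ p.support := by
  induction e using Sym2.ind with
  | _ c d =>
    rcases Sym2.mem_iff.mp hx with rfl | rfl
    · exact p.fst_mem_support_of_mem_edges he
    · exact p.snd_mem_support_of_mem_edges he

lemma reach_prop {V : Type*} {T F : SimpleGraph V} {v0 : V} {uv : Sym2 V}
    (e f e' : Sym2 V)
    (h1 : (IncET T F).Adj (Sum.inl e) (Sum.inr f))
    (h2 : (IncET T F).Adj (Sum.inr f) (Sum.inl e'))
    (hno : ¬ ∃ x y, f = s(x, y) ∧ OnTreePathEdge T x y uv)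
    (hA : ∀ x ∈ e, ¬ (T.deleteEdges {uv}).Reachable v0 x) :
    ∀ z ∈ e', ¬ (T.deleteEdges {uv}).Reachable v0 z := by
  classical
  obtain ⟨-, -, x, y, hfxy, p, hp, hep⟩ := IncET_adj_elim h1
  obtain ⟨-, -, x2, y2, hfxy2, p2, hp2, hep2⟩ := IncET_adj_elim h2.symm
  have huv1 : uv ∉ p.edges := fun hmem => hno ⟨x, y, hfxy, p, hp, hmem⟩
  have huv2 : uv ∉ p2.edges := fun hmem => hno ⟨x2, y2, hfxy2, p2, hp2, hmem⟩
  have hok1 : ∀ e0 ∈ p.edges, e0 ∉ ({uv} : Set (Sym2 V)) := by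
    intro e0 he0 hs; rw [Set.mem_singleton_iff] at hs; exact huv1 (hs ▸ he0)
  have hok2 : ∀ e0 ∈ p2.edges, e0 ∉ ({uv} : Set (Sym2 V)) := by
    intro e0 he0 hs; rw [Set.mem_singleton_iff] at hs; exact huv2 (hs ▸ he0)
  have hr1 : ∀ z ∈ p.support, (T.deleteEdges {uv}).Reachable x z := by
    intro z hz
    exact ⟨(p.toDeleteEdges {uv} hok1).takeUntil z (by rwa [Walk.support_transfer])⟩
  have hr2 : ∀ z ∈ p2.support, (T.deleteEdges {uv}).Reachable x2 z := by
    intro z hz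
    exact ⟨(p2.toDeleteEdges {uv} hok2).takeUntil z (by rwa [Walk.support_transfer])⟩
  have hxx2 : (T.deleteEdges {uv}).Reachable x x2 := by
    have heq : s(x, y) = s(x2, y2) := hfxy.symm.trans hfxy2
    rcases Sym2.eq_iff.mp heq with ⟨rfl, rfl⟩ | ⟨rfl, rfl⟩
    · exact Reachable.refl _
    · exact hr1 _ p.end_mem_support
  intro z hz hr
  -- pick an endpoint of e inside p.support
  have hxe : ∀ a ∈ e, a ∈ p.support := fun a ha => mem_support_of_mem_edges'' hep ha
  have hze : z ∈ p2.support := mem_support_of_mem_edges'' hep2 hz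
  induction e using Sym2.ind with
  | _ a b =>
    exact hA a (Sym2.mem_mk_left a b)
      (((hr.trans (hr2 z hze).symm).trans hxx2.symm).trans
        (hr1 a (hxe a (Sym2.mem_mk_left a b))))


/-- Let `T` be a tree, `F` an edge set on `V(T)`, and let the `s`-`t` path in `T` have at
least `3` edges, its last two edges being `uv` and `vt = e_t`; let `e_s` be its end edge
incident to `s`. If the `(F,E_T)`-incidence graph `H` contains a path from `e_s` to `e_t`,
then some `f ∈ F` on this path is adjacent in `H` to the vertex `uv`, i.e. `uv ∈ E(T_f)`. -/
theorem exists_f_adjacent_to_uv {V : Type*} (T F : SimpleGraph V) (hT : T.IsTree)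
    (s t u v : V) (q : T.Walk s u) (huv : T.Adj u v) (hvt : T.Adj v t)
    (hpath : ((q.concat huv).concat hvt).IsPath)
    (hlen : 3 ≤ ((q.concat huv).concat hvt).length)
    (es : Sym2 V) (hses : s ∈ es) (hes : OnTreePathEdge T s t es)
    (w : (IncET T F).Walk (Sum.inl es) (Sum.inl s(v, t))) (hw : w.IsPath) :
    ∃ f : Sym2 V, Sum.inr f ∈ w.support ∧ f ∈ F.edgeSet ∧
      ∃ x y, f = s(x, y) ∧ OnTreePathEdge T x y s(u, v) := by
  classical
  have hbr : ¬ (T.deleteEdges {s(u, v)}).Reachable u v :=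
    (isBridge_iff.mp ((isAcyclic_iff_forall_adj_isBridge.mp hT.2) huv))
  have hnd : (((q.concat huv).concat hvt).support).Nodup := hpath.support_nodup
  rw [Walk.support_concat, Walk.support_concat] at hnd
  simp only [List.concat_eq_append, List.nodup_append, List.nodup_cons, List.mem_append,
    List.mem_singleton, List.nodup_nil, List.disjoint_singleton] at hnd
  obtain ⟨⟨hqnd, -, hvq⟩, -, htq⟩ := hnd
  replace hvq : v ∉ q.support := fun h => hvq v h v rfl rfl
  replace htq : t ∉ q.support ∧ t ≠ v :=
    ⟨fun h => htq t (Or.inl h) t rfl rfl, fun h => htq v (Or.inr rfl) v h.symm rfl⟩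
  obtain ⟨htq, htv⟩ := htq
  have hsv : s ≠ v := fun h => hvq (h ▸ q.start_mem_support)
  have hst : s ≠ t := fun h => htq (h ▸ q.start_mem_support)
  have hut : u ≠ t := fun h => htq (h ▸ q.end_mem_support)
  have hsu : s ≠ u := by
    rintro rfl
    have : q = Walk.nil := (Walk.isPath_iff_eq_nil (p := q)).mp (Walk.IsPath.mk' hqnd)
    rw [this] at hlen
    simp [Walk.length_concat] at hlen
  -- q avoids the edge uv, lift it
  have hq_noedge : ∀ e0 ∈ q.edges, e0 ∉ ({s(u, v)} : Set (Sym2 V)) := by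
    intro e0 he0 hmem
    rw [Set.mem_singleton_iff] at hmem
    subst hmem
    exact hvq (q.snd_mem_support_of_mem_edges he0)
  have hreach : ∀ x ∈ q.support, (T.deleteEdges {s(u, v)}).Reachable s x := by
    intro x hx
    exact ⟨(q.toDeleteEdges {s(u, v)} hq_noedge).takeUntil x (by rwa [Walk.support_transfer])⟩
  have hns : ¬ (T.deleteEdges {s(u, v)}).Reachable v s := fun h =>
    hbr ((h.trans (hreach u q.end_mem_support)).symm)
  -- identify es as an edge of q
  obtain ⟨p0, hp0, hesp⟩ := hes
  have hPeq : p0 = (q.concat huv).concat hvt := by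
    have := hT.2.path_unique ⟨p0, hp0⟩ ⟨(q.concat huv).concat hvt, hpath⟩
    exact congrArg Subtype.val this
  rw [hPeq, Walk.edges_concat, Walk.edges_concat] at hesp
  simp only [List.concat_eq_append, List.mem_append, List.mem_singleton] at hesp
  have hesq : es ∈ q.edges := by
    rcases hesp with (h | h) | h
    · exact h
    · subst h
      rcases Sym2.mem_iff.mp hses with rfl | rfl
      · exact absurd rfl hsu
      · exact absurd rfl hsv
    · subst h
      rcases Sym2.mem_iff.mp hses with rfl | rfl
      · exact absurd rfl hsv
      · exact absurd rfl hst
  have hNes : ∀ x ∈ es, ¬ (T.deleteEdges {s(u, v)}).Reachable v x := by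
    intro x hx hr
    exact hns (hr.trans (hreach x (mem_support_of_mem_edges'' hesq hx)).symm)
  obtain ⟨f, hf, hfF, hxy⟩ := IncET_key
    (fun e => ∀ x ∈ e, ¬ (T.deleteEdges {s(u, v)}).Reachable v x) s(u, v)
    (fun e f e' h1 h2 hno hN => reach_prop e f e' h1 h2 hno hN)
    (fun hN => hN v (Sym2.mem_mk_left v t) (Reachable.refl v))
    (Sum.inl es) (Sum.inl s(v, t)) w rfl
    (by intro e he; injection he with he; subst he; exact hNes)
    (by intro f hf; exact absurd hf (by simp))
  exact ⟨f, hf, hfF, hxy⟩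
end

section
/- Let F be a symmetric crossing family on a finite set V. Then the inclusion-minimal members of F (the F-cores) are pairwise disjoint. -/
/-- Two sets `A, B ⊆ V` cross if `A∩B`, `A∖B`, `B∖A` and `V∖(A∪B)` are all nonempty. -/
def Crosses {V : Type*} (A B : Set V) : Prop :=
  (A ∩ B).Nonempty ∧ (A \ B).Nonempty ∧ (B \ A).Nonempty ∧ (A ∪ B)ᶜ.Nonempty

/-- A family of subsets of `V` is a crossing family if it is closed under intersection and
union of crossing pairs. -/
def IsCrossingFamily {V : Type*} (𝓕 : Set (Set V)) : Prop :=
  ∀ A B, A ∈ 𝓕 → B ∈ 𝓕 → Crosses A B → A ∩ B ∈ 𝓕 ∧ A ∪ B ∈ 𝓕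

/-- An `𝓕`-core: an inclusion-minimal member of the family `𝓕`. -/
def IsCore {V : Type*} (𝓕 : Set (Set V)) (C : Set V) : Prop :=
  C ∈ 𝓕 ∧ ∀ B ∈ 𝓕, B ⊆ C → B = C

/-- The cores (inclusion-minimal members) of a symmetric crossing family on a finite set
are pairwise disjoint. -/
theorem cores_pairwise_disjoint {V : Type*} [Fintype V] (𝓕 : Set (Set V))
    (hcross : IsCrossingFamily 𝓕) (hsym : ∀ A ∈ 𝓕, Aᶜ ∈ 𝓕) :
    ∀ C C', IsCore 𝓕 C → IsCore 𝓕 C' → C ≠ C' → Disjoint C C' := by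
  intro C C' hC hC' hne
  rw [Set.disjoint_iff_inter_eq_empty]
  by_contra hint
  have hx : (C ∩ C').Nonempty := Set.nonempty_iff_ne_empty.mpr hint
  -- C is not a subset of C', and vice versa
  have hCC' : (C \ C').Nonempty := by
    rw [Set.diff_nonempty]
    intro hsub
    exact hne (hC'.2 C hC.1 hsub)
  have hC'C : (C' \ C).Nonempty := by
    rw [Set.diff_nonempty]
    intro hsub
    exact (Ne.symm hne) (hC.2 C' hC'.1 hsub)
  by_cases hcomp : (C ∪ C')ᶜ.Nonempty
  · have hcr : Crosses C C' := ⟨hx, hCC', hC'C, hcomp⟩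
    have hmem := (hcross C C' hC.1 hC'.1 hcr).1
    have := hC.2 (C ∩ C') hmem Set.inter_subset_left
    have hsub : C ⊆ C' := by
      intro y hy
      have h2 : y ∈ C ∩ C' := by rw [this]; exact hy
      exact h2.2
    obtain ⟨z, hz⟩ := hCC'
    exact hz.2 (hsub hz.1)
  · -- C ∪ C' = univ, so Cᶜ ⊆ C', hence Cᶜ = C' by minimality
    have huniv : C ∪ C' = Set.univ := by
      rw [Set.not_nonempty_iff_eq_empty, Set.compl_empty_iff] at hcomp
      exact hcomp
    have hsub : Cᶜ ⊆ C' := by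
      intro y hy
      have : y ∈ C ∪ C' := huniv ▸ Set.mem_univ y
      rcases this with h | h
      · exact absurd h hy
      · exact h
    have heq : Cᶜ = C' := hC'.2 Cᶜ (hsym C hC.1) hsub
    obtain ⟨z, hz⟩ := hx
    exact (heq ▸ hz.2 : z ∈ Cᶜ) hz.1
end

section
/- Let F be a crossing family on V, J an edge set on V, and suppose S ⊆ J is a set of edges such that for each f ∈ S there exists A_f ∈ F with both endpoints of f in A_f and neither endpoint of a fixed edge g ∈ J∖S in A_f. If for every two f, f' ∈ S with a common endpoint the sets A_f, A_{f'} cross or are nested, and S is connected as a graph, then there exists a single set A ∈ F containing both endpoints of every f ∈ S and no endpoint of g. -/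
/-- Walking from a vertex of `B`, either we stay in `B`, or we meet an edge of `S`
not fully inside `B` but touching `B`. -/
lemma walk_aux {V : Type*} (S : Set (Sym2 V)) (B : Set V) :
    ∀ {u v : V}, (SimpleGraph.fromEdgeSet S).Walk u v → u ∈ B →
      v ∈ B ∨ ∃ e ∈ S, ¬(∀ x ∈ e, x ∈ B) ∧ ∃ z, z ∈ e ∧ z ∈ B := by
  intro u v w
  induction w with
  | nil => exact fun h => Or.inl h
  | @cons a b c hadj p ih =>
    intro ha
    rw [SimpleGraph.fromEdgeSet_adj] at hadj
    by_cases hcov : ∀ x ∈ s(a, b), x ∈ B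
    · exact ih (hcov b (Sym2.mem_mk_right a b))
    · exact Or.inr ⟨s(a, b), hadj.1, hcov, a, Sym2.mem_mk_left a b, ha⟩

/-- Let `𝓕` be a crossing family on `V`, `J` an edge set on `V`, `g ∈ J ∖ S`, and
`S ⊆ J` a set of edges such that each `f ∈ S` has a set `A_f ∈ 𝓕` containing both
endpoints of `f` and no endpoint of `g`. If for every two edges of `S` sharing an endpoint
the corresponding sets cross or are nested, and `S` is connected as a graph, then there is a
single `A ∈ 𝓕` containing both endpoints of every `f ∈ S` and no endpoint of `g`. -/
theorem union_of_separating_sets {V : Type*} [Fintype V] (𝓕 : Set (Set V))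
    (hcross : IsCrossingFamily 𝓕) (J S : Set (Sym2 V)) (hSJ : S ⊆ J)
    (g : Sym2 V) (hg : g ∈ J \ S) (A : Sym2 V → Set V)
    (hA : ∀ f ∈ S, A f ∈ 𝓕 ∧ (∀ x ∈ f, x ∈ A f) ∧ (∀ x ∈ g, x ∉ A f))
    (hpair : ∀ f ∈ S, ∀ f' ∈ S, (∃ x, x ∈ f ∧ x ∈ f') →
      Crosses (A f) (A f') ∨ A f ⊆ A f' ∨ A f' ⊆ A f)
    (hSne : S.Nonempty)
    (hconn : ∀ x y : V, (∃ f ∈ S, x ∈ f) → (∃ f ∈ S, y ∈ f) →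
      (SimpleGraph.fromEdgeSet S).Reachable x y) :
    ∃ B ∈ 𝓕, (∀ f ∈ S, ∀ x ∈ f, x ∈ B) ∧ (∀ x ∈ g, x ∉ B) := by
  classical
  obtain ⟨g1, hg1⟩ : ∃ x, x ∈ g := ⟨g.out.1, Sym2.out_fst_mem g⟩
  suffices h : ∀ n : ℕ, ∀ B : Set V, B ∈ 𝓕 → (∀ x ∈ g, x ∉ B) →
      (∃ f ∈ S, ∀ x ∈ f, x ∈ B) →
      (S \ {f | ∀ x ∈ f, x ∈ B}).ncard ≤ n →
      ∃ B' ∈ 𝓕, (∀ f ∈ S, ∀ x ∈ f, x ∈ B') ∧ (∀ x ∈ g, x ∉ B') by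
    obtain ⟨f0, hf0⟩ := hSne
    obtain ⟨hF, hcov, hgnot⟩ := hA f0 hf0
    exact h _ (A f0) hF hgnot ⟨f0, hf0, hcov⟩ le_rfl
  intro n
  induction n with
  | zero =>
    intro B hBF hBg hBinv hcard
    refine ⟨B, hBF, fun f hf x hx => ?_, hBg⟩
    by_contra hxB
    have hfmem : f ∈ S \ {f | ∀ x ∈ f, x ∈ B} := ⟨hf, fun hall => hxB (hall x hx)⟩
    have : (S \ {f | ∀ x ∈ f, x ∈ B}).ncard ≠ 0 := by
      have hfin : (S \ {f | ∀ x ∈ f, x ∈ B}).Finite := (Set.toFinite S).diff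
      simpa [Set.ncard_eq_zero hfin] using Set.nonempty_of_mem hfmem |>.ne_empty
    omega
  | succ n ih =>
    intro B hBF hBg hBinv hcard
    set T : Set (Sym2 V) := {f | ∀ x ∈ f, x ∈ B} with hT
    by_cases hall : ∀ f ∈ S, f ∈ T
    · exact ⟨B, hBF, fun f hf x hx => hall f hf x hx, hBg⟩
    push_neg at hall
    obtain ⟨f', hf'S, hf'T⟩ := hall
    -- find an edge e ∈ S \ T touching B
    obtain ⟨f0, hf0S, hf0B⟩ := hBinv
    have hx0 : f0.out.1 ∈ f0 := Sym2.out_fst_mem f0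
    have hx' : f'.out.1 ∈ f' := Sym2.out_fst_mem f'
    obtain ⟨w⟩ := hconn f0.out.1 f'.out.1 ⟨f0, hf0S, hx0⟩ ⟨f', hf'S, hx'⟩
    have hstep : ∃ e ∈ S, e ∉ T ∧ ∃ z, z ∈ e ∧ z ∈ B := by
      rcases walk_aux S B w (hf0B _ hx0) with h | ⟨e, heS, heT, hz⟩
      · exact ⟨f', hf'S, hf'T, f'.out.1, hx', h⟩
      · exact ⟨e, heS, heT, hz⟩
    obtain ⟨e, heS, heT, z, hze, hzB⟩ := hstep
    obtain ⟨heF, hecov, hegnot⟩ := hA e heS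
    -- the union B ∪ A e is in 𝓕
    have hunion : B ∪ A e ∈ 𝓕 := by
      by_cases hBA : B ⊆ A e
      · rwa [Set.union_eq_right.mpr hBA]
      · have hc : Crosses B (A e) := by
          refine ⟨⟨z, hzB, hecov z hze⟩, ?_, ?_, ⟨g1, ?_⟩⟩
          · exact Set.not_subset.mp hBA |>.imp fun x hx => ⟨hx.1, hx.2⟩
          · obtain ⟨x, hxe, hxB⟩ := by
              have : ¬ ∀ x ∈ e, x ∈ B := heT
              push_neg at this; exact this
            exact ⟨x, hecov x hxe, hxB⟩
          · intro hmem
            rcases hmem with h | h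
            · exact hBg g1 hg1 h
            · exact hegnot g1 hg1 h
        exact (hcross B (A e) hBF heF hc).2
    -- apply IH to B ∪ A e
    apply ih (B ∪ A e) hunion
    · intro x hxg hx
      rcases hx with h | h
      · exact hBg x hxg h
      · exact hegnot x hxg h
    · exact ⟨f0, hf0S, fun x hx => Or.inl (hf0B x hx)⟩
    · have hsub : S \ {f | ∀ x ∈ f, x ∈ B ∪ A e} ⊆ (S \ T) \ {e} := by
        intro f hf
        refine ⟨⟨hf.1, fun hfT => hf.2 fun x hx => Or.inl (hfT x hx)⟩, ?_⟩
        intro hfe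
        subst hfe
        exact hf.2 fun x hx => Or.inr (hecov x hx)
      have hfin : (S \ T).Finite := (Set.toFinite S).diff
      have hss : (S \ T) \ {e} ⊂ S \ T := by
        refine ⟨Set.diff_subset, fun hsub' => ?_⟩
        exact (hsub' ⟨heS, heT⟩).2 rfl
      have h1 : ((S \ T) \ {e}).ncard < (S \ T).ncard := Set.ncard_lt_ncard hss hfin
      have h2 : (S \ {f | ∀ x ∈ f, x ∈ B ∪ A e}).ncard ≤ ((S \ T) \ {e}).ncard :=
        Set.ncard_le_ncard hsub hfin.diff
      omega
end

section
/- Let G be a connected graph with a spanning tree T, and let J ⊆ E(G) be such that the graph (V, J) restricted to its support is 2-edge-connected spanning a vertex set S. Then T_{J∖E(T)}, the union of tree paths T_f over f ∈ J∖E(T), is a subtree of T (i.e., the covered tree edges form a connected subgraph of T). -/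
open SimpleGraph

/-- Two edge-disjoint `s`-`t` paths exist in `G`, i.e. λ_G(s,t) ≥ 2. -/
def TwoEdgeDisjointPaths {V : Type*} (G : SimpleGraph V) (s t : V) : Prop :=
  ∃ p q : G.Walk s t, p.IsPath ∧ q.IsPath ∧ ∀ e ∈ p.edges, e ∉ q.edges

/-- The set of edges of the tree `T` covered by the tree paths `T_f` of the non-tree edges
`f ∈ J ∖ E(T)`. -/
def CoveredTreeEdges {V : Type*} (T : SimpleGraph V) (J : Set (Sym2 V)) : Set (Sym2 V) :=
  {e | e ∈ T.edgeSet ∧ ∃ f ∈ J, f ∉ T.edgeSet ∧ ∃ x y, f = s(x, y) ∧ OnTreePathEdge T x y e}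

/-- Every vertex on the tree path of a non-tree edge `s(x,y) ∈ J` is reachable from `x`
in the graph of covered tree edges. -/
lemma reach_along_path {V : Type*} [DecidableEq V] {T : SimpleGraph V} {J : Set (Sym2 V)} {x y : V}
    (p : T.Walk x y) (hp : p.IsPath) (hf : s(x, y) ∈ J) (hfT : s(x, y) ∉ T.edgeSet)
    {u : V} (hu : u ∈ p.support) :
    (SimpleGraph.fromEdgeSet (CoveredTreeEdges T J)).Reachable x u := by
  have hcov : ∀ e ∈ p.edges, e ∈ (SimpleGraph.fromEdgeSet (CoveredTreeEdges T J)).edgeSet := by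
    intro e he
    rw [edgeSet_fromEdgeSet]
    exact ⟨⟨p.edges_subset_edgeSet he, s(x, y), hf, hfT, x, y, rfl, p, hp, he⟩,
      T.not_isDiag_of_mem_edgeSet (p.edges_subset_edgeSet he)⟩
  exact ⟨(p.takeUntil u hu).transfer _ fun e he =>
    hcov e (p.edges_takeUntil_subset hu he)⟩

/-- On any walk between vertices not reachable in `T'`, some edge has endpoints not
reachable in `T'`. -/
lemma exists_cut_edge {V : Type*} {K T' : SimpleGraph V} {a b : V} (w : K.Walk a b)
    (hnr : ¬ T'.Reachable a b) :
    ∃ u v, s(u, v) ∈ w.edges ∧ ¬ T'.Reachable u v := by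
  induction w with
  | nil => exact absurd (Reachable.refl _) hnr
  | @cons c d e h p ih =>
    by_cases hr : T'.Reachable c d
    · obtain ⟨u, v, hm, hnr'⟩ := ih fun hr2 => hnr (hr.trans hr2)
      exact ⟨u, v, List.mem_cons_of_mem _ hm, hnr'⟩
    · exact ⟨c, d, List.mem_cons_self, hr⟩

/-- An edge of `J` that is also a tree edge is covered. -/
lemma jtree_edge_covered {V : Type*} {T : SimpleGraph V} (hT : T.IsTree) {J : Set (Sym2 V)}
    (h2ec : ∀ x y : V, (∃ f ∈ J, x ∈ f) → (∃ f ∈ J, y ∈ f) → x ≠ y →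
      TwoEdgeDisjointPaths (SimpleGraph.fromEdgeSet J) x y)
    {a b : V} (hab : s(a, b) ∈ J) (hTe : s(a, b) ∈ T.edgeSet) :
    s(a, b) ∈ CoveredTreeEdges T J := by
  classical
  have hadj : T.Adj a b := hTe
  have hne : a ≠ b := hadj.ne
  -- the edge is a bridge of the tree
  have hbridge : ¬ (T \ SimpleGraph.fromEdgeSet {s(a, b)}).Reachable a b := by
    have := (isAcyclic_iff_forall_edge_isBridge.mp hT.IsAcyclic) hTe
    exact isBridge_iff.mp this
  set T' := T \ SimpleGraph.fromEdgeSet {s(a, b)} with hT'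
  have hT'edge : T'.edgeSet = T.edgeSet \ {s(a, b)} := by
    rw [hT', edgeSet_sdiff, edgeSet_fromEdgeSet, edgeSet_sdiff_sdiff_isDiag]
  -- get a J-walk from a to b avoiding the edge s(a,b)
  obtain ⟨p, q, hp, hq, hdisj⟩ := h2ec a b ⟨s(a, b), hab, Sym2.mem_mk_left a b⟩
    ⟨s(a, b), hab, Sym2.mem_mk_right a b⟩ hne
  obtain ⟨w, hw⟩ : ∃ w : (SimpleGraph.fromEdgeSet J).Walk a b, s(a, b) ∉ w.edges := by
    by_cases h : s(a, b) ∈ p.edges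
    · exact ⟨q, hdisj _ h⟩
    · exact ⟨p, h⟩
  -- find an edge of w crossing the cut
  obtain ⟨u, v, hmem, hnr⟩ := exists_cut_edge w hbridge
  have huv : u ≠ v := fun h => hnr (h ▸ Reachable.refl u)
  have huvJ : s(u, v) ∈ J := by
    have := w.edges_subset_edgeSet hmem
    rw [edgeSet_fromEdgeSet] at this
    exact this.1
  have huvT : s(u, v) ∉ T.edgeSet := by
    intro hT2
    have : s(u, v) ∈ T'.edgeSet := by
      rw [hT'edge]
      refine ⟨hT2, fun hs => ?_⟩
      exact hw (hs ▸ hmem)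
    exact hnr ⟨((SimpleGraph.mem_edgeSet T').mp this).toWalk⟩
  -- the tree path from u to v must use s(a,b)
  obtain ⟨r⟩ := hT.isConnected.preconnected u v
  have hrpath : r.bypass.IsPath := SimpleGraph.Walk.bypass_isPath r
  have hmem2 : s(a, b) ∈ r.bypass.edges := by
    by_contra hn
    apply hnr
    refine ⟨r.bypass.transfer T' fun e he => ?_⟩
    rw [hT'edge]
    exact ⟨r.bypass.edges_subset_edgeSet he, fun hs => hn (hs ▸ he)⟩
  exact ⟨hTe, s(u, v), huvJ, huvT, u, v, rfl, r.bypass, hrpath, hmem2⟩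

/-- Endpoints of any `J`-walk are reachable in the covered-edges graph. -/
lemma walk_reach {V : Type*} {T : SimpleGraph V} (hT : T.IsTree) {J : Set (Sym2 V)}
    (h2ec : ∀ x y : V, (∃ f ∈ J, x ∈ f) → (∃ f ∈ J, y ∈ f) → x ≠ y →
      TwoEdgeDisjointPaths (SimpleGraph.fromEdgeSet J) x y)
    {a b : V} (w : (SimpleGraph.fromEdgeSet J).Walk a b) :
    (SimpleGraph.fromEdgeSet (CoveredTreeEdges T J)).Reachable a b := by
  classical
  induction w with
  | nil => exact Reachable.refl _
  | @cons c d e h p ih =>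
    refine Reachable.trans ?_ ih
    obtain ⟨hJ, hne⟩ := (SimpleGraph.fromEdgeSet_adj _).mp h
    by_cases hTe : s(c, d) ∈ T.edgeSet
    · have hcov := jtree_edge_covered hT h2ec hJ hTe
      exact ⟨((SimpleGraph.fromEdgeSet_adj _).mpr ⟨hcov, hne⟩).toWalk⟩
    · obtain ⟨r⟩ := hT.isConnected.preconnected c d
      exact reach_along_path r.bypass (SimpleGraph.Walk.bypass_isPath r) hJ hTe
        (SimpleGraph.Walk.end_mem_support _)

/-- Let `G` be a connected graph with spanning tree `T` and `J ⊆ E(G)` such that the graph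
`(V, J)` restricted to its support (the vertices covered by `J`) is 2-edge-connected. Then
the tree edges covered by the tree paths `T_f`, `f ∈ J ∖ E(T)`, form a connected subgraph
(a subtree) of `T`. -/
theorem covered_tree_edges_connected {V : Type*} (G T : SimpleGraph V) (hT : T.IsTree)
    (hTG : T ≤ G) (hG : G.Connected) (J : Set (Sym2 V)) (hJ : J ⊆ G.edgeSet)
    (h2ec : ∀ x y : V, (∃ f ∈ J, x ∈ f) → (∃ f ∈ J, y ∈ f) → x ≠ y →
      TwoEdgeDisjointPaths (SimpleGraph.fromEdgeSet J) x y) :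
    ∀ x y : V, (∃ e ∈ CoveredTreeEdges T J, x ∈ e) → (∃ e ∈ CoveredTreeEdges T J, y ∈ e) →
      (SimpleGraph.fromEdgeSet (CoveredTreeEdges T J)).Reachable x y := by
  classical
  -- reduce to: every vertex incident to a covered edge reaches a `J`-support vertex
  have key : ∀ x : V, (∃ e ∈ CoveredTreeEdges T J, x ∈ e) →
      ∃ u : V, (∃ f ∈ J, u ∈ f) ∧
        (SimpleGraph.fromEdgeSet (CoveredTreeEdges T J)).Reachable u x := by
    rintro x ⟨e, ⟨heT, f, hfJ, hfT, u, v, rfl, p, hp, hep⟩, hxe⟩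
    have hxs : x ∈ p.support := by
      induction e with
      | h c d =>
        rcases Sym2.mem_iff.mp hxe with rfl | rfl
        · exact p.fst_mem_support_of_mem_edges hep
        · exact p.snd_mem_support_of_mem_edges hep
    exact ⟨u, ⟨s(u, v), hfJ, Sym2.mem_mk_left u v⟩, reach_along_path p hp hfJ hfT hxs⟩
  intro x y hx hy
  obtain ⟨u, huJ, hux⟩ := key x hx
  obtain ⟨v, hvJ, hvy⟩ := key y hy
  refine hux.symm.trans (Reachable.trans ?_ hvy)
  rcases eq_or_ne u v with rfl | hne
  · exact Reachable.refl _
  · obtain ⟨p, _, _, _⟩ := h2ec u v huJ hvJ hne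
    exact walk_reach hT h2ec p
end

section
/- Let T be a tree on V with s, t ∈ V at distance 2, with middle vertex v on the s-t path, and F an edge set on V with J = T ∪ F. If κ_J(s,t) ≥ 2, then the (F,E_T)-incidence graph H has a path from e_s = sv to e_t = vt. -/
open SimpleGraph

section KappaAux
variable {V : Type*} {T : SimpleGraph V}
variable {V : Type*} {T : SimpleGraph V}

noncomputable def pth (hT : T.IsTree) (v u : V) : T.Walk v u :=
  (hT.existsUnique_path v u).choose

lemma pth_isPath (hT : T.IsTree) (v u : V) : (pth hT v u).IsPath :=
  (hT.existsUnique_path v u).choose_spec.1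

lemma pth_unique (hT : T.IsTree) {v u : V} (p : T.Walk v u) (hp : p.IsPath) :
    pth hT v u = p :=
  ((hT.existsUnique_path v u).choose_spec.2 p hp).symm

noncomputable def nxt (hT : T.IsTree) (v u : V) : V := (pth hT v u).getVert 1

lemma nxt_eq_of_eq_cons (hT : T.IsTree) {v w u : V} {h : T.Adj v w} {q : T.Walk w u}
    (he : pth hT v u = SimpleGraph.Walk.cons h q) : nxt hT v u = w := by
  rw [nxt, he]; simp

lemma pth_decomp (hT : T.IsTree) {v u : V} (hne : v ≠ u) :
    ∃ (w : V) (h : T.Adj v w) (q : T.Walk w u),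
      pth hT v u = SimpleGraph.Walk.cons h q ∧ nxt hT v u = w := by
  cases hp : pth hT v u with
  | nil => exact absurd rfl hne
  | cons h q => exact ⟨_, h, q, rfl, nxt_eq_of_eq_cons hT hp⟩

lemma adj_nxt (hT : T.IsTree) {v u : V} (hne : v ≠ u) : T.Adj v (nxt hT v u) := by
  obtain ⟨w, h, q, _, hw⟩ := pth_decomp hT hne
  rw [hw]; exact h

lemma edge_nxt_mem (hT : T.IsTree) {v u : V} (hne : v ≠ u) :
    s(v, nxt hT v u) ∈ (pth hT v u).edges := by
  obtain ⟨w, h, q, he, hw⟩ := pth_decomp hT hne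
  rw [hw, he]; simp

lemma eq_first_edge (hT : T.IsTree) {v u : V} {e : Sym2 V} (hne : v ≠ u)
    (he : e ∈ (pth hT v u).edges) (hv : v ∈ e) : e = s(v, nxt hT v u) := by
  obtain ⟨w, h, q, hdec, hw⟩ := pth_decomp hT hne
  have hp := pth_isPath hT v u
  rw [hdec] at he hp
  rw [SimpleGraph.Walk.edges_cons] at he
  rw [SimpleGraph.Walk.cons_isPath_iff] at hp
  rcases List.mem_cons.mp he with h1 | h2
  · rw [h1, hw]
  · exfalso
    obtain ⟨z, rfl⟩ := Sym2.mem_iff_exists.mp hv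
    exact hp.2 (SimpleGraph.Walk.fst_mem_support_of_mem_edges q h2)

lemma nxt_eq_of_mem_support (hT : T.IsTree) {v x u : V} (hvx : v ≠ x) (hvu : v ≠ u)
    (hu : u ∈ (pth hT v x).support) : nxt hT v u = nxt hT v x := by
  classical
  have hP : pth hT v u = (pth hT v x).takeUntil u hu :=
    pth_unique hT _ ((pth_isPath hT v x).takeUntil hu)
  have hmem : s(v, nxt hT v u) ∈ (pth hT v x).edges := by
    have := edge_nxt_mem hT hvu
    rw [hP] at this
    exact SimpleGraph.Walk.edges_takeUntil_subset _ hu this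
  have := eq_first_edge hT hvx hmem (by simp)
  exact Sym2.congr_right.mp this

lemma nxt_eq_of_adj (hT : T.IsTree) {v x y : V} (hvx : v ≠ x) (hvy : v ≠ y)
    (hxy : T.Adj x y) : nxt hT v x = nxt hT v y := by
  classical
  by_cases hy : y ∈ (pth hT v x).support
  · exact (nxt_eq_of_mem_support hT hvx hvy hy).symm
  · obtain ⟨w, h, q, hdec, hw⟩ := pth_decomp hT hvx
    have hcp : ((pth hT v x).concat hxy).IsPath := by
      rw [← SimpleGraph.Walk.isPath_reverse_iff, SimpleGraph.Walk.reverse_concat,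
        SimpleGraph.Walk.cons_isPath_iff]
      refine ⟨(SimpleGraph.Walk.isPath_reverse_iff _).mpr (pth_isPath hT v x), ?_⟩
      rw [SimpleGraph.Walk.support_reverse]
      simpa using hy
    have hP : pth hT v y = (pth hT v x).concat hxy :=
      pth_unique hT _ hcp
    rw [hdec, SimpleGraph.Walk.concat_cons] at hP
    rw [hw, nxt_eq_of_eq_cons hT hP]

lemma cross_path (hT : T.IsTree) {v x y : V} (hvx : v ≠ x) (hvy : v ≠ y)
    (hne : nxt hT v x ≠ nxt hT v y) :
    ∃ P : T.Walk x y, P.IsPath ∧ s(v, nxt hT v x) ∈ P.edges ∧ s(v, nxt hT v y) ∈ P.edges := by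
  classical
  refine ⟨(pth hT v x).reverse.append (pth hT v y), ?_, ?_, ?_⟩
  · rw [SimpleGraph.Walk.isPath_def, SimpleGraph.Walk.support_append,
      SimpleGraph.Walk.support_reverse]
    rw [List.nodup_append]
    refine ⟨List.nodup_reverse.mpr (pth_isPath hT v x).support_nodup,
      (pth_isPath hT v y).support_nodup.sublist (List.tail_sublist _), ?_⟩
    intro u hu1 b hu2 hub
    rw [← hub] at hu2
    have hu1' : u ∈ (pth hT v x).support := List.mem_reverse.mp hu1
    have huv : u ≠ v := by
      have hnd := (pth_isPath hT v y).support_nodup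
      rw [SimpleGraph.Walk.support_eq_cons] at hnd
      intro h
      exact (List.nodup_cons.mp hnd).1 (h ▸ hu2)
    have hu2' : u ∈ (pth hT v y).support := List.mem_of_mem_tail hu2
    have h1 := nxt_eq_of_mem_support hT hvx (Ne.symm huv) hu1'
    have h2 := nxt_eq_of_mem_support hT hvy (Ne.symm huv) hu2'
    exact hne (h1 ▸ h2 ▸ rfl)
  · rw [SimpleGraph.Walk.edges_append, SimpleGraph.Walk.edges_reverse]
    exact List.mem_append_left _ (List.mem_reverse.mpr (edge_nxt_mem hT hvx))
  · rw [SimpleGraph.Walk.edges_append]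
    exact List.mem_append_right _ (edge_nxt_mem hT hvy)

lemma incET_adj_left {F : SimpleGraph V} (hT : T.IsTree) {v x y : V} (hvx : v ≠ x)
    (hvy : v ≠ y) (hne : nxt hT v x ≠ nxt hT v y) (hF : F.Adj x y) :
    (IncET T F).Adj (Sum.inl s(v, nxt hT v x)) (Sum.inr s(x, y)) ∧
    (IncET T F).Adj (Sum.inr s(x, y)) (Sum.inl s(v, nxt hT v y)) := by
  obtain ⟨P, hP, he1, he2⟩ := cross_path hT hvx hvy hne
  constructor
  · rw [IncET, SimpleGraph.fromRel_adj]
    exact ⟨by simp, Or.inl ⟨_, _, rfl, rfl, (adj_nxt hT hvx), hF, x, y, rfl, P, hP, he1⟩⟩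
  · rw [IncET, SimpleGraph.fromRel_adj]
    exact ⟨by simp, Or.inr ⟨_, _, rfl, rfl, (adj_nxt hT hvy), hF, x, y, rfl, P, hP, he2⟩⟩

lemma step_reach {F : SimpleGraph V} (hT : T.IsTree) {v x y : V} (hvx : v ≠ x)
    (hvy : v ≠ y) (hxy : (T ⊔ F).Adj x y) :
    (IncET T F).Reachable (Sum.inl s(v, nxt hT v x)) (Sum.inl s(v, nxt hT v y)) := by
  by_cases h : nxt hT v x = nxt hT v y
  · rw [h]
  · rcases hxy with hTadj | hFadj
    · exact absurd (nxt_eq_of_adj hT hvx hvy hTadj) h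
    · obtain ⟨h1, h2⟩ := incET_adj_left hT hvx hvy h hFadj
      exact h1.reachable.trans h2.reachable

lemma reach_along {F : SimpleGraph V} (hT : T.IsTree) {v t : V} :
    ∀ {a : V} (W : (T ⊔ F).Walk a t), v ∉ W.support →
      (IncET T F).Reachable (Sum.inl s(v, nxt hT v a)) (Sum.inl s(v, nxt hT v t)) := by
  intro a W
  induction W with
  | nil => intro _; rfl
  | cons h W ih =>
    intro hv
    rw [SimpleGraph.Walk.support_cons, List.mem_cons] at hv
    push_neg at hv
    have hvb : v ∉ W.support := hv.2
    have hb : v ≠ _ := fun he => hvb (he.symm ▸ W.start_mem_support)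
    exact (step_reach hT hv.1 hb h).trans (ih hvb)

end KappaAux

/-- Base case `|P| = 2` of Lemma 4 (one direction): if `s` and `t` are at distance 2 in the
tree `T`, with middle vertex `v`, and `κ_{T ∪ F}(s,t) ≥ 2`, then the `(F,E_T)`-incidence
graph has a path from `e_s = sv` to `e_t = vt`. -/
theorem kappa_ge_two_implies_reachable_dist_two {V : Type*} (T F : SimpleGraph V)
    (hT : T.IsTree) (s v t : V) (hsv : T.Adj s v) (hvt : T.Adj v t) (hst : s ≠ t)
    (h : TwoInternallyDisjointPaths (T ⊔ F) s t) :
    (IncET T F).Reachable (Sum.inl s(s, v)) (Sum.inl s(v, t)) := by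
  obtain ⟨p, q, hp, hq, -, hdisj⟩ := h
  have hvs : v ≠ s := hsv.ne'
  have hvt' : v ≠ t := hvt.ne
  have hnot : v ∉ p.support ∨ v ∉ q.support := by
    by_contra hc
    push_neg at hc
    rcases hdisj v hc.1 hc.2 with h1 | h1
    · exact hvs h1
    · exact hvt' h1
  have hns : nxt hT v s = s := by
    have hP : pth hT v s = SimpleGraph.Walk.cons hsv.symm SimpleGraph.Walk.nil :=
      pth_unique hT _ (by simp [SimpleGraph.Walk.cons_isPath_iff, hsv.ne'])
    exact nxt_eq_of_eq_cons hT hP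
  have hnt : nxt hT v t = t := by
    have hP : pth hT v t = SimpleGraph.Walk.cons hvt SimpleGraph.Walk.nil :=
      pth_unique hT _ (by simp [SimpleGraph.Walk.cons_isPath_iff, hvt.ne])
    exact nxt_eq_of_eq_cons hT hP
  have key : (IncET T F).Reachable (Sum.inl s(v, nxt hT v s)) (Sum.inl s(v, nxt hT v t)) := by
    rcases hnot with h1 | h1
    · exact reach_along hT p h1
    · exact reach_along hT q h1
  rw [hns, hnt] at key
  have hsw : s(s, v) = s(v, s) := Sym2.eq_swap
  rw [hsw]
  exact key
end

section
/- Let T be a tree with edge set E_T, F an edge set on V(T), and let uv ∈ E_T. Partition F into F_s = {f ∈ F : both endpoints of f in the component of T − uv containing s} and F_t = {f ∈ F : both endpoints in the other component} ∪ {f : T_f contains uv}. If no f ∈ F has uv on its tree path T_f, then in the (F,E_T)-incidence graph there is no path between any edge of T in the s-side component and any edge of T in the t-side component. -/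
open SimpleGraph

/-- Let `T` be a tree and `uv ∈ E(T)`, so that `T − uv` has two components, one containing
`u` and one containing `v`. If no `f ∈ F` has `uv` on its tree path `T_f`, then in the
`(F,E_T)`-incidence graph there is no path between a tree edge lying in the `u`-side
component and a tree edge lying in the `v`-side component. -/
theorem no_path_across_uncovered_edge {V : Type*} (T F : SimpleGraph V) (hT : T.IsTree)
    (u v : V) (huv : T.Adj u v)
    (hnone : ∀ f ∈ F.edgeSet, ∀ x y, f = s(x, y) → ¬ OnTreePathEdge T x y s(u, v))
    (e₁ e₂ : Sym2 V) (he₁ : e₁ ∈ T.edgeSet) (he₂ : e₂ ∈ T.edgeSet)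
    (h₁ : ∀ x ∈ e₁, (T.deleteEdges {s(u, v)}).Reachable u x)
    (h₂ : ∀ x ∈ e₂, (T.deleteEdges {s(u, v)}).Reachable v x) :
    ¬ (IncET T F).Reachable (Sum.inl e₁) (Sum.inl e₂) := by
  classical
  set T' := T.deleteEdges {s(u, v)} with hT'
  -- u and v are not reachable in T − uv, since every edge of a tree is a bridge
  have hnr : ¬ T'.Reachable u v := by
    have hb := (SimpleGraph.isAcyclic_iff_forall_edge_isBridge.mp hT.2)
      (e := s(u, v)) (T.mem_edgeSet.mpr huv)
    rw [SimpleGraph.isBridge_iff] at hb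
    exact hb
  -- invariant: some endpoint is reachable from u in T − uv
  let Q : Sym2 V ⊕ Sym2 V → Prop := fun a => ∃ x ∈ Sum.elim id id a, T'.Reachable u x
  -- adjacency in IncET preserves Q
  have key : ∀ a b, (IncET T F).Adj a b → (Q a ↔ Q b) := by
    have main : ∀ a b, (∃ e f, a = Sum.inl e ∧ b = Sum.inr f ∧ e ∈ T.edgeSet ∧
        f ∈ F.edgeSet ∧ ∃ x y, f = s(x, y) ∧ OnTreePathEdge T x y e) → (Q a ↔ Q b) := by
      rintro a b ⟨e, f, rfl, rfl, heT, hfF, x, y, rfl, p, hp, hep⟩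
      have hne : s(u, v) ∉ p.edges := by
        intro h
        exact hnone _ hfF x y rfl ⟨p, hp, h⟩
      have hedges : ∀ e' ∈ p.edges, e' ∈ T'.edgeSet := by
        intro e' he'
        rw [hT', SimpleGraph.edgeSet_deleteEdges]
        exact ⟨p.edges_subset_edgeSet he', by rintro rfl; exact hne he'⟩
      let p' : T'.Walk x y := p.transfer T' hedges
      have hsupp : p'.support = p.support := SimpleGraph.Walk.support_transfer _ _
      have reachX : ∀ z ∈ p.support, T'.Reachable x z := by
        intro z hz
        rw [← hsupp] at hz
        exact ⟨p'.takeUntil z hz⟩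
      induction e using Sym2.ind with | _ a₁ b₁ => ?_
      have ha₁ : a₁ ∈ p.support := p.fst_mem_support_of_mem_edges hep
      have hxx : x ∈ p.support := p.start_mem_support
      constructor
      · rintro ⟨z, hz, hr⟩
        refine ⟨x, by simp, ?_⟩
        simp only [Sum.elim_inl, id] at hz
        have hzs : z ∈ p.support := by
          rcases Sym2.mem_iff.mp hz with rfl | rfl
          · exact ha₁
          · exact p.snd_mem_support_of_mem_edges hep
        exact hr.trans ((reachX z hzs).symm.trans (reachX x hxx))
      · rintro ⟨z, hz, hr⟩
        refine ⟨a₁, by simp, ?_⟩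
        simp only [Sum.elim_inr, id] at hz
        have hrx : T'.Reachable u x := by
          rcases Sym2.mem_iff.mp hz with rfl | rfl
          · exact hr
          · exact hr.trans ⟨p'.reverse⟩
        exact hrx.trans (reachX a₁ ha₁)
    intro a b hab
    rw [IncET, SimpleGraph.fromRel_adj] at hab
    rcases hab.2 with h | h
    · exact main a b h
    · exact (main b a h).symm
  -- Q is constant along walks
  have walkQ : ∀ {a b : Sym2 V ⊕ Sym2 V}, (IncET T F).Walk a b → (Q a ↔ Q b) := by
    intro a b w
    induction w with
    | nil => rfl
    | cons h _ ih => exact (key _ _ h).trans ih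
  rintro ⟨w⟩
  have hQ1 : Q (Sum.inl e₁) := by
    induction e₁ using Sym2.ind with | _ a₁ b₁ => ?_
    exact ⟨a₁, by simp, h₁ a₁ (by simp)⟩
  obtain ⟨z, hz, hr⟩ := (walkQ w).mp hQ1
  simp only [Sum.elim_inl, id] at hz
  exact hnr (hr.trans (h₂ z hz).symm)
end
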